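/- arXiv:2301.09867 — 8 statements merged into one kernel-verified Lean document; each statement's English description precedes it below -/
import Mathlib

section
/- Let G be a connected graph with at least 2 vertices. Then G has an optimal solvable pebble distribution D (i.e., solvable and of minimum size) such that every vertex v that is not 2-reachable under D satisfies D(v) = 0. -/
open Finset

/-- A single pebbling move: remove two pebbles from `u` and place one on an
adjacent vertex `v`. -/
def PebblingStep {V : Type*} [DecidableEq V] (G : SimpleGraph V) (D D' : V → ℕ) : Prop :=
  ∃ u v, G.Adj u v ∧ 2 ≤ D u ∧
    D' = Function.update (Function.update D u (D u - 2)) v (D v + 1)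

/-- `D'` is obtained from `D` by an executable sequence of pebbling moves. -/
def PebblingReaches {V : Type*} [DecidableEq V] (G : SimpleGraph V) : (V → ℕ) → (V → ℕ) → Prop :=
  Relation.ReflTransGen (PebblingStep G)

/-- A vertex `v` is `k`-reachable under `D`. -/
def KReachable {V : Type*} [DecidableEq V] (G : SimpleGraph V) (D : V → ℕ) (k : ℕ) (v : V) : Prop :=
  ∃ D', PebblingReaches G D D' ∧ k ≤ D' v

/-- A distribution is solvable if every vertex is (1-)reachable. -/
def Solvable {V : Type*} [DecidableEq V] (G : SimpleGraph V) (D : V → ℕ) : Prop :=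
  ∀ v, KReachable G D 1 v

/-- The size of a pebble distribution. -/
def distSize {V : Type*} [Fintype V] (D : V → ℕ) : ℕ := ∑ v, D v

/-- The optimal pebbling number `π*`. -/
noncomputable def optPebbling {V : Type*} [Fintype V] [DecidableEq V] (G : SimpleGraph V) : ℕ :=
  sInf {n | ∃ D : V → ℕ, Solvable G D ∧ distSize D = n}

/-- The `t`-restricted optimal pebbling number `π*_t`. -/
noncomputable def optPebblingRes {V : Type*} [Fintype V] [DecidableEq V]
    (G : SimpleGraph V) (t : ℕ) : ℕ :=
  sInf {n | ∃ D : V → ℕ, (∀ v, D v ≤ t) ∧ Solvable G D ∧ distSize D = n}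

lemma reaches_add {V : Type*} [DecidableEq V] (G : SimpleGraph V) {D D' : V → ℕ}
    (h : PebblingReaches G D D') (c : V → ℕ) :
    PebblingReaches G (fun x => D x + c x) (fun x => D' x + c x) := by
  induction h with
  | refl => exact Relation.ReflTransGen.refl
  | @tail b d hab hbd ih =>
    obtain ⟨u, v, hadj, h2, heq⟩ := hbd
    refine ih.tail ⟨u, v, hadj, by show 2 ≤ b u + c u; omega, ?_⟩
    subst heq
    have huv : u ≠ v := G.ne_of_adj hadj
    funext x
    rcases eq_or_ne x v with rfl | hv
    · simp only [Function.update_apply, eq_self_iff_true, if_true, if_neg huv.symm]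
      omega
    · rcases eq_or_ne x u with rfl | hu
      · simp only [Function.update_apply, if_neg hv, eq_self_iff_true, if_true]
        omega
      · simp [Function.update_apply, hv, hu]

lemma inert {V : Type*} [DecidableEq V] {G : SimpleGraph V} {D D' : V → ℕ} {v : V}
    (hnot : ¬ KReachable G D 2 v) (h1 : D v = 1)
    (h : PebblingReaches G D D') :
    D' v = 1 ∧ PebblingReaches G (Function.update D v 0) (Function.update D' v 0) := by
  induction h with
  | refl => exact ⟨h1, Relation.ReflTransGen.refl⟩
  | @tail b d hab hbd ih =>
    obtain ⟨ihv, ihr⟩ := ih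
    obtain ⟨u, w, hadj, h2, heq⟩ := hbd
    have huw : u ≠ w := G.ne_of_adj hadj
    have huv : u ≠ v := by rintro rfl; omega
    have hwv : w ≠ v := by
      rintro rfl
      refine hnot ⟨d, hab.tail ⟨u, w, hadj, h2, heq⟩, ?_⟩
      subst heq
      simp [Function.update_apply, huv]
      omega
    subst heq
    constructor
    · simp [Function.update_apply, hwv.symm, huv.symm, ihv]
    · refine ihr.tail ⟨u, w, hadj, by simp [Function.update_apply, huv]; omega, ?_⟩
      funext x
      rcases eq_or_ne x v with rfl | hv
      · simp [Function.update_apply, hwv.symm, huv.symm]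
      · rcases eq_or_ne x w with rfl | hw
        · simp [Function.update_apply, hwv, huv]
        · rcases eq_or_ne x u with rfl | hu
          · simp [Function.update_apply, huv, huw, hw]
          · simp [Function.update_apply, hv, hw, hu]

lemma distSize_update {V : Type*} [Fintype V] [DecidableEq V] (f : V → ℕ) (a : V) (b : ℕ) :
    distSize (Function.update f a b) + f a = distSize f + b := by
  unfold distSize
  rw [Finset.sum_update_of_mem (Finset.mem_univ a), ← Finset.erase_eq,
    ← Finset.sum_erase_add Finset.univ f (Finset.mem_univ a)]
  omega

theorem exists_optimal_distribution_no_pebbles_on_non_two_reachable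
    {V : Type*} [Fintype V] [DecidableEq V] (G : SimpleGraph V)
    (hconn : G.Connected) (hcard : 2 ≤ Fintype.card V) :
    ∃ D : V → ℕ, Solvable G D ∧ distSize D = optPebbling G ∧
      ∀ v, ¬ KReachable G D 2 v → D v = 0 := by
  classical
  have key : ∀ n (D : V → ℕ), Solvable G D → distSize D = optPebbling G →
      (Finset.univ.filter (fun w => D w ≠ 0 ∧ ¬ KReachable G D 2 w)).card ≤ n →
      ∃ D : V → ℕ, Solvable G D ∧ distSize D = optPebbling G ∧
        ∀ v, ¬ KReachable G D 2 v → D v = 0 := by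
    intro n
    induction n with
    | zero =>
      intro D hs hsz hc
      refine ⟨D, hs, hsz, fun v hv => ?_⟩
      by_contra hne
      have : v ∈ Finset.univ.filter (fun w => D w ≠ 0 ∧ ¬ KReachable G D 2 w) := by
        simp [hne, hv]
      have := Finset.card_pos.mpr ⟨v, this⟩
      omega
    | succ n ih =>
      intro D hs hsz hc
      by_cases hle : (Finset.univ.filter (fun w => D w ≠ 0 ∧ ¬ KReachable G D 2 w)).card ≤ n
      · exact ih D hs hsz hle
      -- pick a bad vertex v
      have hpos : 0 < (Finset.univ.filter (fun w => D w ≠ 0 ∧ ¬ KReachable G D 2 w)).card := by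
        omega
      obtain ⟨v, hvmem⟩ := Finset.card_pos.mp hpos
      have hv : D v ≠ 0 ∧ ¬ KReachable G D 2 v := by
        simpa using hvmem
      have h1 : D v = 1 := by
        rcases Nat.lt_or_ge (D v) 2 with h | h
        · omega
        · exact absurd ⟨D, Relation.ReflTransGen.refl, h⟩ hv.2
      -- find a neighbor u of v
      obtain ⟨w₀, hw₀⟩ := Fintype.exists_ne_of_one_lt_card (by omega) v
      obtain ⟨p⟩ := hconn.preconnected v w₀
      obtain ⟨u, hadj⟩ : ∃ u, G.Adj v u := by
        cases p with
        | nil => exact absurd rfl hw₀.symm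
        | cons h q => exact ⟨_, h⟩
      have huv : u ≠ v := (G.ne_of_adj hadj).symm
      -- the new distribution
      set E : V → ℕ := Function.update (Function.update D v 0) u (D u + 1) with hE
      have hEu : E u = D u + 1 := by simp [hE, Function.update_apply, huv]
      have hEv : E v = 0 := by simp [hE, Function.update_apply, huv.symm]
      have hEx : ∀ x, x ≠ u → x ≠ v → E x = D x := by
        intro x hxu hxv
        simp [hE, Function.update_apply, hxu, hxv]
      have hEeq : E = fun x => Function.update D v 0 x + (if x = u then 1 else 0) := by
        funext x
        rcases eq_or_ne x u with rfl | hxu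
        · simp [hEu, Function.update_apply, huv]
        · rcases eq_or_ne x v with rfl | hxv
          · simp [hEv, Function.update_apply, hxu]
          · simp [hEx x hxu hxv, Function.update_apply, hxu, hxv]
      -- transfer of reachability
      have transfer : ∀ k w, w ≠ v → KReachable G D k w → KReachable G E k w := by
        intro k w hwv ⟨D₁, hr, hk⟩
        obtain ⟨hD₁v, hr'⟩ := inert hv.2 h1 hr
        have := reaches_add G hr' (fun x => if x = u then 1 else 0)
        rw [← hEeq] at this
        refine ⟨_, this, ?_⟩
        simp only [Function.update_apply, if_neg hwv]
        omega
      -- u is 2-reachable under E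
      have h2u : KReachable G E 2 u := by
        obtain ⟨D₁, hr, hk⟩ := hs u
        obtain ⟨hD₁v, hr'⟩ := inert hv.2 h1 hr
        have := reaches_add G hr' (fun x => if x = u then 1 else 0)
        rw [← hEeq] at this
        refine ⟨_, this, ?_⟩
        simp only [Function.update_apply, if_neg huv, eq_self_iff_true, if_true]
        omega
      -- v is 1-reachable under E
      have h1v : KReachable G E 1 v := by
        obtain ⟨F, hF, hk⟩ := h2u
        refine ⟨_, hF.tail ⟨u, v, hadj.symm, hk, rfl⟩, ?_⟩
        simp [Function.update_apply]
      -- E is solvable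
      have hsolvE : Solvable G E := by
        intro w
        rcases eq_or_ne w v with rfl | hwv
        · exact h1v
        · exact transfer 1 w hwv (hs w)
      -- E has the same size
      have hszE : distSize E = optPebbling G := by
        have e1 := distSize_update (Function.update D v 0) u (D u + 1)
        have e2 := distSize_update D v 0
        rw [← hE] at e1
        have : Function.update D v 0 u = D u := by
          simp [Function.update_apply, huv]
        omega
      -- the bad set shrinks
      have hsub : Finset.univ.filter (fun w => E w ≠ 0 ∧ ¬ KReachable G E 2 w) ⊆
          (Finset.univ.filter (fun w => D w ≠ 0 ∧ ¬ KReachable G D 2 w)).erase v := by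
        intro w hw
        simp only [Finset.mem_filter, Finset.mem_univ, true_and] at hw
        have hwv : w ≠ v := by rintro rfl; exact hw.1 hEv
        have hwu : w ≠ u := by rintro rfl; exact hw.2 h2u
        rw [Finset.mem_erase]
        refine ⟨hwv, ?_⟩
        simp only [Finset.mem_filter, Finset.mem_univ, true_and]
        refine ⟨by rw [← hEx w hwu hwv]; exact hw.1, fun h2w => hw.2 (transfer 2 w hwv h2w)⟩
      have hcE : (Finset.univ.filter (fun w => E w ≠ 0 ∧ ¬ KReachable G E 2 w)).card ≤ n := by
        have := Finset.card_le_card hsub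
        have := Finset.card_erase_of_mem hvmem
        omega
      exact ih E hsolvE hszE hcE
  -- the set defining optPebbling is nonempty, so the infimum is attained
  have hne : {n | ∃ D : V → ℕ, Solvable G D ∧ distSize D = n}.Nonempty :=
    ⟨distSize (fun _ => 1), fun _ => 1, fun v => ⟨fun _ => 1, Relation.ReflTransGen.refl, le_refl 1⟩, rfl⟩
  obtain ⟨D, hsD, hszD⟩ := Nat.sInf_mem hne
  exact key _ D hsD hszD le_rfl
end

section
/- If H is a quotient of G (i.e., there is a surjective map φ : V(G) → V(H) such that {h₁,h₂} ∈ E(H) iff h₁ = φ(g₁), h₂ = φ(g₂) for some edge {g₁,g₂} ∈ E(G)), then π*(G) ≥ π*(H). -/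
open Finset

/-- The collapsed distribution. -/
def pushDist {V W : Type*} [Fintype V] [DecidableEq W] (φ : V → W) (D : V → ℕ) : W → ℕ :=
  fun w => ∑ g, if φ g = w then D g else 0

lemma le_pushDist {V W : Type*} [Fintype V] [DecidableEq W] (φ : V → W) (D : V → ℕ) (g : V) :
    D g ≤ pushDist φ D (φ g) := by
  have := Finset.single_le_sum (f := fun x => if φ x = φ g then D x else 0)
    (fun i _ => Nat.zero_le _) (Finset.mem_univ g)
  simpa [pushDist] using this

lemma pushDist_step {V W : Type*} [Fintype V] [DecidableEq V] [Fintype W] [DecidableEq W]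
    (G : SimpleGraph V) (H : SimpleGraph W) (φ : V → W)
    (hquot : ∀ h₁ h₂, H.Adj h₁ h₂ ↔ ∃ g₁ g₂, G.Adj g₁ g₂ ∧ φ g₁ = h₁ ∧ φ g₂ = h₂)
    {D D' : V → ℕ} (h : PebblingStep G D D') :
    PebblingStep H (pushDist φ D) (pushDist φ D') := by
  obtain ⟨u, v, huv, hDu, hD'⟩ := h
  subst hD'
  have hadj : H.Adj (φ u) (φ v) := (hquot _ _).2 ⟨u, v, huv, rfl, rfl⟩
  have hne : φ u ≠ φ v := hadj.ne
  have huvne : u ≠ v := huv.ne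
  have h2 : 2 ≤ pushDist φ D (φ u) := le_trans hDu (le_pushDist φ D u)
  refine ⟨φ u, φ v, hadj, h2, ?_⟩
  funext w
  have key : pushDist φ (Function.update (Function.update D u (D u - 2)) v (D v + 1)) w
      + (if φ u = w then 2 else 0)
      = pushDist φ D w + (if φ v = w then 1 else 0) := by
    have hu : (if φ u = w then 2 else 0)
        = ∑ g, if g = u then (if φ u = w then 2 else 0) else 0 := by
      rw [Finset.sum_ite_eq' Finset.univ u fun _ => (if φ u = w then 2 else 0)]
      simp
    have hv : (if φ v = w then 1 else 0)
        = ∑ g, if g = v then (if φ v = w then 1 else 0) else 0 := by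
      rw [Finset.sum_ite_eq' Finset.univ v fun _ => (if φ v = w then 1 else 0)]
      simp
    rw [pushDist, pushDist, hu, hv, ← Finset.sum_add_distrib, ← Finset.sum_add_distrib]
    apply Finset.sum_congr rfl
    intro g _
    rcases eq_or_ne g u with rfl | hgu
    · have hval : Function.update (Function.update D g (D g - 2)) v (D v + 1) g = D g - 2 := by
        rw [Function.update_of_ne huvne, Function.update_self]
      rw [hval, if_pos rfl, if_neg huvne]
      split_ifs <;> omega
    · rcases eq_or_ne g v with rfl | hgv
      · rw [Function.update_self, if_neg (Ne.symm huvne), if_pos rfl]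
        split_ifs <;> omega
      · rw [Function.update_of_ne hgv, Function.update_of_ne hgu, if_neg hgu, if_neg hgv]
  rcases eq_or_ne w (φ v) with rfl | hwv
  · rw [Function.update_self]
    have h1 : (if φ u = φ v then 2 else 0) = 0 := if_neg hne
    have h2 : (if φ v = φ v then 1 else 0) = 1 := if_pos rfl
    omega
  · rw [Function.update_of_ne hwv]
    rcases eq_or_ne w (φ u) with rfl | hwu
    · rw [Function.update_self]
      have h1 : (if φ u = φ u then 2 else 0) = 2 := if_pos rfl
      have h3 : (if φ v = φ u then 1 else 0) = 0 := if_neg (Ne.symm hne)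
      omega
    · rw [Function.update_of_ne hwu]
      have h1 : (if φ u = w then 2 else 0) = 0 := if_neg (Ne.symm hwu)
      have h3 : (if φ v = w then 1 else 0) = 0 := if_neg (Ne.symm hwv)
      omega

lemma pushDist_reaches {V W : Type*} [Fintype V] [DecidableEq V] [Fintype W] [DecidableEq W]
    (G : SimpleGraph V) (H : SimpleGraph W) (φ : V → W)
    (hquot : ∀ h₁ h₂, H.Adj h₁ h₂ ↔ ∃ g₁ g₂, G.Adj g₁ g₂ ∧ φ g₁ = h₁ ∧ φ g₂ = h₂)
    {D D' : V → ℕ} (h : PebblingReaches G D D') :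
    PebblingReaches H (pushDist φ D) (pushDist φ D') := by
  induction h with
  | refl => exact Relation.ReflTransGen.refl
  | tail _ hstep ih => exact ih.tail (pushDist_step G H φ hquot hstep)

theorem collapsing {V W : Type*} [Fintype V] [DecidableEq V] [Fintype W] [DecidableEq W]
    (G : SimpleGraph V) (H : SimpleGraph W) (φ : V → W)
    (hsurj : Function.Surjective φ)
    (hquot : ∀ h₁ h₂, H.Adj h₁ h₂ ↔ ∃ g₁ g₂, G.Adj g₁ g₂ ∧ φ g₁ = h₁ ∧ φ g₂ = h₂) :
    optPebbling H ≤ optPebbling G := by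
  have hGne : {n | ∃ D : V → ℕ, Solvable G D ∧ distSize D = n}.Nonempty := by
    refine ⟨distSize (fun _ : V => 1), fun _ => 1, fun v => ⟨fun _ => 1, Relation.ReflTransGen.refl, le_refl 1⟩, rfl⟩
  have hmem := Nat.sInf_mem hGne
  obtain ⟨D, hsolv, hsize⟩ := hmem
  apply Nat.sInf_le
  refine ⟨pushDist φ D, ?_, ?_⟩
  · intro w
    obtain ⟨g, rfl⟩ := hsurj w
    obtain ⟨D', hreach, hge⟩ := hsolv g
    exact ⟨pushDist φ D', pushDist_reaches G H φ hquot hreach,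
      le_trans hge (le_pushDist φ D' g)⟩
  · unfold optPebbling
    rw [← hsize]
    unfold distSize pushDist
    rw [Finset.sum_comm]
    apply Finset.sum_congr rfl
    intro g _
    simp
end

section
/- Let G be a graph and D a pebble distribution on G such that D(v) = 3 for some vertex v and D(u) ≤ 1 for all u ≠ v. Then D is not an optimal distribution; i.e., if D is solvable, then there is a solvable distribution of strictly smaller size. -/
open Finset

section Aux

variable {V : Type*} [DecidableEq V] {G : SimpleGraph V}

/-- Sparse configuration: all values ≤ 2 and at most one vertex with 2. -/
def Sparse (E : V → ℕ) : Prop :=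
  (∀ x, E x ≤ 2) ∧ ∀ x y, 2 ≤ E x → 2 ≤ E y → x = y

lemma lemB {b u : V} (p : G.Walk b u) (hp : p.IsPath) :
    ∀ F : V → ℕ, 2 ≤ F b → (∀ y ∈ p.support, y ≠ b → y ≠ u → 1 ≤ F y) →
    KReachable G F 1 u := by
  induction p with
  | nil =>
    intro F h2 _
    exact ⟨F, Relation.ReflTransGen.refl, by omega⟩
  | @cons b c u hadj q ih =>
    intro F h2 hint
    have hbc : b ≠ c := hadj.ne
    have hbq : b ∉ q.support := ((SimpleGraph.Walk.cons_isPath_iff hadj q).mp hp).2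
    have hq : q.IsPath := ((SimpleGraph.Walk.cons_isPath_iff hadj q).mp hp).1
    set F1 := Function.update (Function.update F b (F b - 2)) c (F c + 1) with hF1
    have hstep : PebblingStep G F F1 := ⟨b, c, hadj, h2, rfl⟩
    have hF1c : F1 c = F c + 1 := by simp [hF1]
    by_cases hcu : c = u
    · subst hcu
      exact ⟨F1, Relation.ReflTransGen.single hstep, by omega⟩
    · have hc1 : 1 ≤ F c := by
        refine hint c ?_ (Ne.symm hbc) hcu
        simp [SimpleGraph.Walk.support_cons]
      have h2c : 2 ≤ F1 c := by omega
      have hint' : ∀ y ∈ q.support, y ≠ c → y ≠ u → 1 ≤ F1 y := by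
        intro y hy hyc hyu
        have hyb : y ≠ b := fun h => hbq (h ▸ hy)
        have : F1 y = F y := by
          rw [hF1, Function.update_of_ne hyc, Function.update_of_ne hyb]
        rw [this]
        exact hint y (by simp [SimpleGraph.Walk.support_cons, hy]) hyb hyu
      obtain ⟨E, hE, hEu⟩ := ih hq F1 h2c hint'
      exact ⟨E, hE.head hstep, hEu⟩

lemma lemA {u : V} {E E' : V → ℕ}
    (h : Relation.ReflTransGen (PebblingStep G) E E') (hE'u : 1 ≤ E' u) :
    Sparse E →
    (1 ≤ E u ∨ ∃ b, ∃ p : G.Walk b u, p.IsPath ∧ E b = 2 ∧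
      ∀ y ∈ p.support, y ≠ b → y ≠ u → 1 ≤ E y) := by
  induction h using Relation.ReflTransGen.head_induction_on with
  | refl => intro _; exact Or.inl hE'u
  | @head E E1 hstep hrest IH =>
    intro hsE
    obtain ⟨b, c, hadj, hb2, hE1⟩ := hstep
    have hbc : b ≠ c := hadj.ne
    have hEb : E b = 2 := le_antisymm (hsE.1 b) hb2
    have hE1b : E1 b = 0 := by
      rw [hE1, Function.update_of_ne hbc, Function.update_self, hEb]
    have hE1c : E1 c = E c + 1 := by rw [hE1, Function.update_self]
    have hE1other : ∀ y, y ≠ b → y ≠ c → E1 y = E y := by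
      intro y hyb hyc
      rw [hE1, Function.update_of_ne hyc, Function.update_of_ne hyb]
    have hEc : E c ≤ 1 := by
      by_contra hh
      exact hbc (hsE.2 b c (by omega) (by omega))
    have hsE1 : Sparse E1 := by
      constructor
      · intro x
        by_cases hxb : x = b
        · simp [hxb, hE1b]
        by_cases hxc : x = c
        · subst hxc; omega
        · rw [hE1other x hxb hxc]; exact hsE.1 x
      · intro x y hx hy
        have key : ∀ z, 2 ≤ E1 z → z = c := by
          intro z hz
          by_cases hzb : z = b
          · rw [hzb, hE1b] at hz; omega
          by_cases hzc : z = c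
          · exact hzc
          · rw [hE1other z hzb hzc] at hz
            exact absurd (hsE.2 z b hz (by omega)) hzb
        rw [key x hx, key y hy]
    rcases IH hsE1 with h1 | ⟨b', p, hp, hb'2, hint⟩
    · -- 1 ≤ E1 u
      by_cases hub : u = b
      · exact Or.inl (by rw [hub, hEb]; omega)
      by_cases huc : u = c
      · subst huc
        refine Or.inr ⟨b, SimpleGraph.Walk.cons hadj SimpleGraph.Walk.nil, ?_, hEb, ?_⟩
        · rw [SimpleGraph.Walk.cons_isPath_iff]
          exact ⟨SimpleGraph.Walk.IsPath.nil, by simp [hbc]⟩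
        · intro y hy hyb hyu
          simp [SimpleGraph.Walk.support_cons, SimpleGraph.Walk.support_nil] at hy
          rcases hy with h | h
          · exact absurd h hyb
          · exact absurd h hyu
      · exact Or.inl (by rw [← hE1other u hub huc]; exact h1)
    · -- chain from b' in E1
      have hb'c : b' = c := by
        by_cases hzb : b' = b
        · rw [hzb, hE1b] at hb'2; omega
        by_cases hzc : b' = c
        · exact hzc
        · rw [hE1other b' hzb hzc] at hb'2
          exact absurd (hsE.2 b' b (by omega) (by omega)) hzb
      subst hb'c
      have hEc1 : E b' = 1 := by omega
      by_cases hbp : b ∈ p.support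
      · -- b must be u (E1 b = 0, so b can't be interior)
        have hbu : b = u := by
          by_contra hbu
          have := hint b hbp hbc hbu
          omega
        exact Or.inl (by rw [← hbu, hEb]; omega)
      · refine Or.inr ⟨b, SimpleGraph.Walk.cons hadj p, ?_, hEb, ?_⟩
        · rw [SimpleGraph.Walk.cons_isPath_iff]; exact ⟨hp, hbp⟩
        · intro y hy hyb hyu
          rw [SimpleGraph.Walk.support_cons, List.mem_cons] at hy
          rcases hy with h | hy
          · exact absurd h hyb
          by_cases hyc : y = b'
          · rw [hyc, hEc1]
          · rw [← hE1other y hyb hyc]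
            exact hint y hy hyc hyu

end Aux

theorem three_pebbles_not_optimal {V : Type*} [Fintype V] [DecidableEq V]
    (G : SimpleGraph V) (D : V → ℕ) (v : V)
    (hv : D v = 3) (hu : ∀ u, u ≠ v → D u ≤ 1) (hsolv : Solvable G D) :
    ∃ D' : V → ℕ, Solvable G D' ∧ distSize D' < distSize D := by
  classical
  set D' : V → ℕ := Function.update D v 2 with hD'
  have hD'v : D' v = 2 := by simp [hD']
  have hD'other : ∀ x, x ≠ v → D' x = D x := by
    intro x hx; simp [hD', Function.update_of_ne hx]
  refine ⟨D', ?_, ?_⟩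
  · -- Solvable
    intro u
    by_cases huv : u = v
    · exact ⟨D', Relation.ReflTransGen.refl, by rw [huv, hD'v]; omega⟩
    by_cases hDu : 1 ≤ D u
    · exact ⟨D', Relation.ReflTransGen.refl, by rwa [hD'other u huv]⟩
    have hDu0 : D u = 0 := by omega
    obtain ⟨E', hreach, hE'u⟩ := hsolv u
    rcases (Relation.ReflTransGen.cases_head hreach) with heq | ⟨E1, hstep, hrest⟩
    · rw [← heq] at hE'u; omega
    obtain ⟨b, c, hadj, hb2, hE1⟩ := hstep
    have hbv : b = v := by
      by_contra hh
      have := hu b hh; omega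
    rw [hbv] at hadj hE1
    have hvc : c ≠ v := hadj.ne'
    have hE1v : E1 v = 1 := by
      rw [hE1, Function.update_of_ne (Ne.symm hvc), Function.update_self, hv]
    have hE1c : E1 c = D c + 1 := by rw [hE1, Function.update_self]
    have hE1other : ∀ y, y ≠ v → y ≠ c → E1 y = D y := by
      intro y hyv hyc
      rw [hE1, Function.update_of_ne hyc, Function.update_of_ne hyv]
    have hsE1 : Sparse E1 := by
      constructor
      · intro x
        by_cases hxv : x = v
        · rw [hxv, hE1v]; omega
        by_cases hxc : x = c
        · rw [hxc, hE1c]; have := hu c hvc; omega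
        · rw [hE1other x hxv hxc]; exact le_trans (hu x hxv) (by omega)
      · intro x y hx hy
        have key : ∀ z, 2 ≤ E1 z → z = c := by
          intro z hz
          by_cases hzv : z = v
          · rw [hzv, hE1v] at hz; omega
          by_cases hzc : z = c
          · exact hzc
          · rw [hE1other z hzv hzc] at hz
            have := hu z hzv; omega
        rw [key x hx, key y hy]
    rcases lemA hrest hE'u hsE1 with h1 | ⟨b', p, hp, hb'2, hint⟩
    · -- 1 ≤ E1 u, u ≠ v, D u = 0 ⇒ u = c
      have huc : u = c := by
        by_contra hh
        rw [hE1other u huv hh] at h1; omega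
      subst huc
      refine lemB (SimpleGraph.Walk.cons hadj SimpleGraph.Walk.nil) ?_ D' (by omega) ?_
      · rw [SimpleGraph.Walk.cons_isPath_iff]
        exact ⟨SimpleGraph.Walk.IsPath.nil, by simp [Ne.symm huv]⟩
      · intro y hy hyb hyu
        simp [SimpleGraph.Walk.support_cons, SimpleGraph.Walk.support_nil] at hy
        rcases hy with h | h
        · exact absurd h hyb
        · exact absurd h hyu
    · -- chain from b' = c
      have hb'c : b' = c := by
        by_cases hzv : b' = v
        · rw [hzv, hE1v] at hb'2; omega
        by_cases hzc : b' = c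
        · exact hzc
        · rw [hE1other b' hzv hzc] at hb'2
          have := hu b' hzv; omega
      subst hb'c
      have hDc : D b' = 1 := by omega
      by_cases hvp : v ∈ p.support
      · -- use the suffix of p from v
        have hq := hp.dropUntil hvp
        set q := p.dropUntil v hvp with hqdef
        have hcq : b' ∉ q.support := by
          intro hcq
          have hnodup := hp.support_nodup
          rw [← SimpleGraph.Walk.take_spec p hvp, SimpleGraph.Walk.support_append] at hnodup
          have hdisj := List.disjoint_of_nodup_append hnodup
          have hcT : b' ∈ (p.takeUntil v hvp).support := SimpleGraph.Walk.start_mem_support _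
          have hcq' : b' ∈ q.support.tail := by
            have h := hcq
            rw [q.support_eq_cons] at h
            rcases List.mem_cons.mp h with h | h
            · exact absurd h hvc
            · exact h
          exact hdisj hcT hcq'
        refine lemB q hq D' (by omega) ?_
        intro y hy hyv hyu
        have hyp : y ∈ p.support := SimpleGraph.Walk.support_dropUntil_subset p hvp hy
        have hyc : y ≠ b' := fun h => hcq (h ▸ hy)
        rw [hD'other y hyv, ← hE1other y hyv hyc]
        exact hint y hyp hyc hyu
      · -- first move v → b' in D', then follow p
        set F1 := Function.update (Function.update D' v (D' v - 2)) b' (D' b' + 1) with hF1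
        have hstep' : PebblingStep G D' F1 := ⟨v, b', hadj, by omega, rfl⟩
        have hF1c : F1 b' = D b' + 1 := by
          rw [hF1, Function.update_self, hD'other b' hvc]
        have hintF : ∀ y ∈ p.support, y ≠ b' → y ≠ u → 1 ≤ F1 y := by
          intro y hy hyc hyu
          have hyv : y ≠ v := fun h => hvp (h ▸ hy)
          have : F1 y = D y := by
            rw [hF1, Function.update_of_ne hyc, Function.update_of_ne hyv,
              hD'other y hyv]
          rw [this, ← hE1other y hyv hyc]
          exact hint y hy hyc hyu
        obtain ⟨E2, hE2, hE2u⟩ := lemB p hp F1 (by omega) hintF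
        exact ⟨E2, hE2.head hstep', hE2u⟩
  · -- size
    have h1 : distSize D' = 2 + ∑ x ∈ Finset.univ \ {v}, D x := by
      rw [hD', distSize, Finset.sum_update_of_mem (Finset.mem_univ v)]
    have h2 : distSize D = ∑ x ∈ Finset.univ \ {v}, D x + D v :=
      Finset.sum_eq_sum_sdiff_singleton_add (Finset.mem_univ v) D
    omega
end

section
/- If G is a graph with π*(G) ≤ 3, then π*_2(G) = π*(G). -/
open Finset

lemma solvable_const_one {V : Type*} [DecidableEq V] (G : SimpleGraph V) :
    Solvable G (fun _ => 1) := fun v => ⟨fun _ => 1, Relation.ReflTransGen.refl, le_refl 1⟩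

/-- Characterization of distributions reachable from three pebbles on `u`. -/
lemma reach_from_three {V : Type*} [DecidableEq V] (G : SimpleGraph V) (u : V)
    (D' : V → ℕ) (h : PebblingReaches G (fun v => if v = u then 3 else 0) D') :
    D' = (fun v => if v = u then 3 else 0) ∨
    ∃ w, G.Adj u w ∧ D' = (fun v => if v = u then 1 else if v = w then 1 else 0) := by
  induction h with
  | refl => exact Or.inl rfl
  | tail hab hstep ih =>
    obtain ⟨a, x, hadj, h2, heq⟩ := hstep
    rcases ih with hb | ⟨w, hw, hb⟩
    · subst hb
      have hau : a = u := by by_contra hne; simp [hne] at h2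
      subst hau
      have hxu : x ≠ a := (G.ne_of_adj hadj).symm
      right
      refine ⟨x, hadj, ?_⟩
      subst heq
      funext v
      by_cases hv : v = x
      · subst hv; simp [Function.update, hxu]
      · by_cases hv2 : v = a <;> simp [Function.update, hv, hv2, hxu]
    · exfalso
      rw [hb] at h2
      by_cases h1 : a = u
      · simp [h1] at h2
      · by_cases h3 : a = w <;> simp [h1, h3] at h2

theorem restricted_eq_of_optPebbling_le_three {V : Type*} [Fintype V] [DecidableEq V]
    (G : SimpleGraph V) (h : optPebbling G ≤ 3) :
    optPebblingRes G 2 = optPebbling G := by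
  have hSne : {n | ∃ D : V → ℕ, (∀ v, D v ≤ 2) ∧ Solvable G D ∧ distSize D = n}.Nonempty :=
    ⟨distSize (fun _ : V => 1), fun _ : V => 1, fun _ => one_le_two, solvable_const_one G, rfl⟩
  have hTne : {n | ∃ D : V → ℕ, Solvable G D ∧ distSize D = n}.Nonempty :=
    ⟨distSize (fun _ : V => 1), fun _ : V => 1, solvable_const_one G, rfl⟩
  -- π* ≤ π*₂
  have h1 : optPebbling G ≤ optPebblingRes G 2 := by
    obtain ⟨D, _, hsolv, hsz⟩ := Nat.sInf_mem hSne
    exact Nat.sInf_le ⟨D, hsolv, hsz⟩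
  -- π*₂ ≤ π*
  have h2 : optPebblingRes G 2 ≤ optPebbling G := by
    obtain ⟨D, hsolv, hsz⟩ := Nat.sInf_mem hTne
    by_cases hb : ∀ v, D v ≤ 2
    · exact Nat.sInf_le ⟨D, hb, hsolv, hsz⟩
    · push_neg at hb
      obtain ⟨u, hu⟩ := hb
      have hu3 : 3 ≤ D u := hu
      have hopt : optPebbling G = distSize D := hsz.symm
      have hsum3 : distSize D ≤ 3 := hsz.le.trans h
      have hle : D u ≤ distSize D := Finset.single_le_sum (fun i _ => Nat.zero_le _) (mem_univ u)
      have hDu : D u = 3 := le_antisymm (hle.trans hsum3) hu3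
      have hrest : ∀ v, v ≠ u → D v = 0 := by
        intro v hv
        have hsplit : D u + ∑ x ∈ univ.erase u, D x = distSize D :=
          Finset.add_sum_erase _ D (mem_univ u)
        have hz : ∑ x ∈ univ.erase u, D x = 0 := by omega
        have := Finset.sum_eq_zero_iff.mp hz v (by simp [hv])
        exact this
      have hD0 : D = (fun v => if v = u then 3 else 0) := by
        funext v
        by_cases hv : v = u
        · simp [hv, hDu]
        · simp [hv, hrest v hv]
      -- every vertex is u or adjacent to u
      have hdom : ∀ v, v = u ∨ G.Adj u v := by
        intro v
        obtain ⟨D', hreach, hv1⟩ := hsolv v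
        rw [hD0] at hreach
        rcases reach_from_three G u D' hreach with hD' | ⟨w, hw, hD'⟩
        · rw [hD'] at hv1
          by_cases hv : v = u
          · exact Or.inl hv
          · simp [hv] at hv1
        · rw [hD'] at hv1
          by_cases hv : v = u
          · exact Or.inl hv
          · by_cases hv2 : v = w
            · exact Or.inr (hv2 ▸ hw)
            · simp [hv, hv2] at hv1
      -- u must have a neighbor
      have hnbr : ∃ w, G.Adj u w := by
        by_contra hno
        push_neg at hno
        have hVu : ∀ v : V, v = u := by
          intro v
          rcases hdom v with hv | hv
          · exact hv
          · exact absurd hv (hno v)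
        -- then the constant-one distribution has size 1, contradicting π* = 3
        have hcard : distSize (fun _ : V => 1) = 1 := by
          simp [distSize, Finset.card_univ]
          have : Fintype.card V = 1 := Fintype.card_eq_one_iff.mpr ⟨u, fun v => hVu v⟩
          exact this
        have hle1 : optPebbling G ≤ 1 := Nat.sInf_le ⟨fun _ => 1, solvable_const_one G, hcard⟩
        omega
      obtain ⟨w, hw⟩ := hnbr
      have hwu : w ≠ u := (G.ne_of_adj hw).symm
      -- the replacement distribution
      set E : V → ℕ := fun v => if v = u then 2 else if v = w then 1 else 0 with hE
      have hEsolv : Solvable G E := by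
        intro v
        rcases hdom v with hv | hv
        · exact ⟨E, Relation.ReflTransGen.refl, by simp [hE, hv]⟩
        · refine ⟨Function.update (Function.update E u (E u - 2)) v (E v + 1),
            Relation.ReflTransGen.single ⟨u, v, hv, by simp [hE], rfl⟩, ?_⟩
          simp [Function.update]
      have hEsize : distSize E = 3 := by
        have : distSize E = ∑ v, E v := rfl
        rw [this]
        rw [← Finset.add_sum_erase _ E (mem_univ u)]
        rw [← Finset.add_sum_erase _ E (Finset.mem_erase.mpr ⟨hwu, mem_univ w⟩)]
        have hrest0 : ∑ x ∈ (univ.erase u).erase w, E x = 0 := by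
          apply Finset.sum_eq_zero
          intro x hx
          simp only [Finset.mem_erase] at hx
          simp [hE, hx.1, hx.2.1]
        rw [hrest0]
        simp [hE, hwu]
      have hn3 : optPebbling G = 3 := by omega
      rw [hn3]
      refine Nat.sInf_le ⟨E, ?_, hEsolv, hEsize⟩
      intro v
      by_cases h1 : v = u
      · simp [hE, h1]
      · by_cases h3 : v = w <;> simp [hE, h1, h3, hwu]
  exact le_antisymm h2 h1
end

section
/- Let G be a graph on n vertices with minimum degree δ(G) ≥ (2/3)n − 1. Then π*_2(G) = π*(G). -/
open Finset

section AuxPebbling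

variable {V : Type*} [DecidableEq V] {G : SimpleGraph V}

/-- One pebbling move gives 1-reachability of the target. -/
lemma kreach_step {D : V → ℕ} {u v : V} (h : G.Adj u v) (h2 : 2 ≤ D u) :
    KReachable G D 1 v := by
  refine ⟨_, Relation.ReflTransGen.single ⟨u, v, h, h2, rfl⟩, ?_⟩
  rw [Function.update_self]
  omega

/-- If `u` dominates the graph, two pebbles at `u` solve everything. -/
lemma solvable_two (u : V) (hdom : ∀ v, v = u ∨ G.Adj u v) :
    Solvable G (fun w => if w = u then 2 else 0) := by
  intro v
  rcases hdom v with rfl | hadj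
  · exact ⟨_, Relation.ReflTransGen.refl, by simp⟩
  · exact kreach_step hadj (by simp)

/-- Characterization of distributions reachable from three pebbles at `u`. -/
lemma reach_three {u : V} {D' : V → ℕ}
    (h : PebblingReaches G (fun w => if w = u then 3 else 0) D') :
    D' = (fun w => if w = u then 3 else 0) ∨
      ((∀ w, D' w ≤ 1) ∧ ∀ w, 1 ≤ D' w → w = u ∨ G.Adj u w) := by
  induction h with
  | refl => exact Or.inl rfl
  | tail hab hbc ih =>
    obtain ⟨p, q, hadj, hp, hEq⟩ := hbc
    rcases ih with rfl | ⟨hle, _⟩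
    · have hpu : p = u := by
        by_contra hne
        simp [hne] at hp
      subst hpu
      have hqu : q ≠ p := hadj.ne'
      refine Or.inr ⟨?_, ?_⟩
      · intro w
        subst hEq
        rcases eq_or_ne w q with rfl | hwq
        · simp [Function.update_self, hqu]
        · rcases eq_or_ne w p with rfl | hwp
          · rw [Function.update_of_ne hwq, Function.update_self]; simp
          · simp [Function.update_of_ne hwq, Function.update_of_ne hwp, hwp]
      · intro w hw
        subst hEq
        rcases eq_or_ne w q with rfl | hwq
        · exact Or.inr hadj
        · rcases eq_or_ne w p with rfl | hwp
          · exact Or.inl rfl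
          · simp [Function.update_of_ne hwq, Function.update_of_ne hwp, hwp] at hw
    · exact absurd hp (by have := hle p; omega)

/-- If three pebbles at `u` form a solvable distribution then `u` dominates. -/
lemma three_dominates {u : V} (h : Solvable G (fun w => if w = u then 3 else 0)) :
    ∀ v, v = u ∨ G.Adj u v := by
  intro v
  obtain ⟨D', hr, hv⟩ := h v
  rcases reach_three hr with rfl | ⟨_, h2⟩
  · rcases eq_or_ne v u with rfl | hvu
    · exact Or.inl rfl
    · simp [hvu] at hv
  · exact h2 v hv

/-- The `2 + 2` distribution on `a, b` is solvable provided every vertex is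
dominated by `a` or `b` or has a common neighbour with both. -/
lemma solvable_pair {a b : V} (hab : a ≠ b)
    (hdom : ∀ w, (w = a ∨ G.Adj a w) ∨ (w = b ∨ G.Adj b w) ∨
      ∃ x, G.Adj a x ∧ G.Adj b x ∧ G.Adj w x) :
    Solvable G (fun w => if w = a then 2 else if w = b then 2 else 0) := by
  intro w
  set D0 : V → ℕ := fun w => if w = a then 2 else if w = b then 2 else 0 with hD0
  have hD0a : D0 a = 2 := by simp [hD0]
  have hD0b : D0 b = 2 := by simp [hD0, hab.symm]
  rcases hdom w with (rfl | haw) | (rfl | hbw) | ⟨x, hax, hbx, hwx⟩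
  · exact ⟨_, Relation.ReflTransGen.refl, by simp [hD0a]⟩
  · exact kreach_step haw (by omega)
  · exact ⟨_, Relation.ReflTransGen.refl, by simp [hD0b]⟩
  · exact kreach_step hbw (by omega)
  · have hxa : x ≠ a := hax.ne'
    have hxb : x ≠ b := hbx.ne'
    set D1 := Function.update (Function.update D0 a (D0 a - 2)) x (D0 x + 1) with hD1
    set D2 := Function.update (Function.update D1 b (D1 b - 2)) x (D1 x + 1) with hD2
    have s1 : PebblingStep G D0 D1 := ⟨a, x, hax, by omega, hD1⟩
    have hD1b : D1 b = 2 := by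
      rw [hD1, Function.update_of_ne hxb.symm, Function.update_of_ne hab.symm, hD0b]
    have hD1x : D1 x = D0 x + 1 := by rw [hD1, Function.update_self]
    have s2 : PebblingStep G D1 D2 := ⟨b, x, hbx, by omega, hD2⟩
    have hD2x : D2 x = D1 x + 1 := by rw [hD2, Function.update_self]
    refine ⟨_, Relation.ReflTransGen.head s1 (Relation.ReflTransGen.head s2
      (Relation.ReflTransGen.single ⟨x, w, G.adj_symm hwx, by omega, rfl⟩)), ?_⟩
    rw [Function.update_self]
    omega

end AuxPebbling

section AuxCounting

variable {V : Type*} [Fintype V] [DecidableEq V] (G : SimpleGraph V) [DecidableRel G.Adj]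

lemma deg_bound (hδ : (2 : ℚ) / 3 * Fintype.card V - 1 ≤ G.minDegree) (v : V) :
    2 * Fintype.card V ≤ 3 * G.degree v + 3 := by
  have h1 : (G.minDegree : ℚ) ≤ (G.degree v : ℚ) := by
    exact_mod_cast G.minDegree_le_degree v
  have h2 : (2 : ℚ) * Fintype.card V ≤ 3 * G.degree v + 3 := by linarith
  exact_mod_cast h2

lemma common_nbr (hd : ∀ v, 2 * Fintype.card V ≤ 3 * G.degree v + 3)
    {a b : V} (hab : a ≠ b) (hnadj : ¬ G.Adj a b) :
    ∃ x, G.Adj a x ∧ G.Adj b x := by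
  classical
  set n := Fintype.card V with hn
  set Na := G.neighborFinset a with hNa
  set Nb := G.neighborFinset b with hNb
  have hsub : Na ∪ Nb ⊆ Finset.univ \ {a, b} := by
    intro x hx
    simp only [Finset.mem_sdiff, Finset.mem_univ, Finset.mem_insert,
      Finset.mem_singleton, true_and]
    rcases Finset.mem_union.mp hx with hx | hx
    · rw [hNa, SimpleGraph.mem_neighborFinset] at hx
      push_neg
      exact ⟨hx.ne', fun h => hnadj (h ▸ hx)⟩
    · rw [hNb, SimpleGraph.mem_neighborFinset] at hx
      push_neg
      exact ⟨fun h => hnadj (G.adj_symm (h ▸ hx)), hx.ne'⟩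
  have hcard2 : ({a, b} : Finset V).card = 2 := Finset.card_pair hab
  have hn2 : 2 ≤ n := by
    rw [← hcard2]; exact Finset.card_le_univ _
  have hU : (Na ∪ Nb).card ≤ n - 2 := by
    calc (Na ∪ Nb).card ≤ (Finset.univ \ {a, b}).card := Finset.card_le_card hsub
    _ = n - 2 := by rw [Finset.card_sdiff_of_subset (Finset.subset_univ _), hcard2, Finset.card_univ]
  have hE : (Na ∪ Nb).card + (Na ∩ Nb).card = Na.card + Nb.card :=
    Finset.card_union_add_card_inter _ _
  have hda : 2 * n ≤ 3 * Na.card + 3 := by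
    rw [hNa, SimpleGraph.card_neighborFinset_eq_degree]; exact hd a
  have hdb : 2 * n ≤ 3 * Nb.card + 3 := by
    rw [hNb, SimpleGraph.card_neighborFinset_eq_degree]; exact hd b
  have hpos : 0 < (Na ∩ Nb).card := by omega
  obtain ⟨x, hx⟩ := Finset.card_pos.mp hpos
  rw [Finset.mem_inter, hNa, hNb, SimpleGraph.mem_neighborFinset,
    SimpleGraph.mem_neighborFinset] at hx
  exact ⟨x, hx.1, hx.2⟩

lemma common_nbr3 (hd : ∀ v, 2 * Fintype.card V ≤ 3 * G.degree v + 3)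
    {a b w : V} (hab : a ≠ b) (hnadj : ¬ G.Adj a b)
    (hwa : w ≠ a) (hwb : w ≠ b) (hwna : ¬ G.Adj a w) (hwnb : ¬ G.Adj b w) :
    ∃ x, G.Adj a x ∧ G.Adj b x ∧ G.Adj w x := by
  classical
  set n := Fintype.card V with hn
  set Na := G.neighborFinset a with hNa
  set Nb := G.neighborFinset b with hNb
  set Nw := G.neighborFinset w with hNw
  set S := Na ∩ Nb with hS
  have hsub1 : Na ∪ Nb ⊆ Finset.univ \ {a, b} := by
    intro x hx
    simp only [Finset.mem_sdiff, Finset.mem_univ, Finset.mem_insert,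
      Finset.mem_singleton, true_and]
    rcases Finset.mem_union.mp hx with hx | hx
    · rw [hNa, SimpleGraph.mem_neighborFinset] at hx
      push_neg
      exact ⟨hx.ne', fun h => hnadj (h ▸ hx)⟩
    · rw [hNb, SimpleGraph.mem_neighborFinset] at hx
      push_neg
      exact ⟨fun h => hnadj (G.adj_symm (h ▸ hx)), hx.ne'⟩
  have hsub2 : S ∪ Nw ⊆ Finset.univ \ {a, b, w} := by
    intro x hx
    simp only [Finset.mem_sdiff, Finset.mem_univ, Finset.mem_insert,
      Finset.mem_singleton, true_and]
    push_neg
    rcases Finset.mem_union.mp hx with hx | hx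
    · rw [hS, Finset.mem_inter, hNa, hNb, SimpleGraph.mem_neighborFinset,
        SimpleGraph.mem_neighborFinset] at hx
      exact ⟨hx.1.ne', hx.2.ne', fun h => hwna (h ▸ hx.1)⟩
    · rw [hNw, SimpleGraph.mem_neighborFinset] at hx
      refine ⟨fun h => hwna (G.adj_symm (h ▸ hx)), fun h => hwnb (G.adj_symm (h ▸ hx)), hx.ne'⟩
  have hcard2 : ({a, b} : Finset V).card = 2 := Finset.card_pair hab
  have hcard3 : ({a, b, w} : Finset V).card = 3 := by
    rw [Finset.card_insert_of_notMem (by simp [hab, hwa.symm]),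
      Finset.card_pair hwb.symm]
  have hn3 : 3 ≤ n := by rw [← hcard3]; exact Finset.card_le_univ _
  have hU1 : (Na ∪ Nb).card ≤ n - 2 := by
    calc (Na ∪ Nb).card ≤ (Finset.univ \ {a, b}).card := Finset.card_le_card hsub1
    _ = n - 2 := by rw [Finset.card_sdiff_of_subset (Finset.subset_univ _), hcard2, Finset.card_univ]
  have hU2 : (S ∪ Nw).card ≤ n - 3 := by
    calc (S ∪ Nw).card ≤ (Finset.univ \ {a, b, w}).card := Finset.card_le_card hsub2
    _ = n - 3 := by rw [Finset.card_sdiff_of_subset (Finset.subset_univ _), hcard3, Finset.card_univ]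
  have hE1 : (Na ∪ Nb).card + S.card = Na.card + Nb.card :=
    Finset.card_union_add_card_inter _ _
  have hE2 : (S ∪ Nw).card + (S ∩ Nw).card = S.card + Nw.card :=
    Finset.card_union_add_card_inter _ _
  have hda : 2 * n ≤ 3 * Na.card + 3 := by
    rw [hNa, SimpleGraph.card_neighborFinset_eq_degree]; exact hd a
  have hdb : 2 * n ≤ 3 * Nb.card + 3 := by
    rw [hNb, SimpleGraph.card_neighborFinset_eq_degree]; exact hd b
  have hdw : 2 * n ≤ 3 * Nw.card + 3 := by
    rw [hNw, SimpleGraph.card_neighborFinset_eq_degree]; exact hd w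
  have hpos : 0 < (S ∩ Nw).card := by omega
  obtain ⟨x, hx⟩ := Finset.card_pos.mp hpos
  rw [Finset.mem_inter, hS, Finset.mem_inter, hNa, hNb, hNw,
    SimpleGraph.mem_neighborFinset, SimpleGraph.mem_neighborFinset,
    SimpleGraph.mem_neighborFinset] at hx
  exact ⟨x, hx.1.1, hx.1.2, hx.2⟩

end AuxCounting

theorem restricted_eq_of_large_minDegree {V : Type*} [Fintype V] [DecidableEq V]
    (G : SimpleGraph V) [DecidableRel G.Adj]
    (hδ : (2 : ℚ) / 3 * Fintype.card V - 1 ≤ G.minDegree) :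
    optPebblingRes G 2 = optPebbling G := by
  classical
  have hd := deg_bound G hδ
  have hS2ne : {n | ∃ D : V → ℕ, (∀ v, D v ≤ 2) ∧ Solvable G D ∧ distSize D = n}.Nonempty :=
    ⟨distSize (fun _ : V => 1), ⟨fun _ : V => 1, fun _ => one_le_two,
      fun v => ⟨_, Relation.ReflTransGen.refl, le_refl 1⟩, rfl⟩⟩
  have hSne : {n | ∃ D : V → ℕ, Solvable G D ∧ distSize D = n}.Nonempty :=
    ⟨distSize (fun _ : V => 1), ⟨fun _ : V => 1,
      fun v => ⟨_, Relation.ReflTransGen.refl, le_refl 1⟩, rfl⟩⟩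
  refine le_antisymm ?_ ?_
  · -- `optPebblingRes G 2 ≤ optPebbling G`
    obtain ⟨D, hsolv, hsize⟩ :
        ∃ D : V → ℕ, Solvable G D ∧ distSize D = optPebbling G := Nat.sInf_mem hSne
    by_cases hall : ∀ v, D v ≤ 2
    · exact Nat.sInf_le ⟨D, hall, hsolv, hsize⟩
    · push_neg at hall
      obtain ⟨u, hu⟩ := hall
      have hu3 : 3 ≤ D u := hu
      have hDum : D u ≤ optPebbling G := by
        rw [← hsize]
        exact Finset.single_le_sum (fun i _ => Nat.zero_le _) (Finset.mem_univ u)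
      suffices h : ∃ D' : V → ℕ, (∀ v, D' v ≤ 2) ∧ Solvable G D' ∧
          distSize D' ≤ optPebbling G by
        obtain ⟨D', h2, hs, hle⟩ := h
        exact le_trans (Nat.sInf_le ⟨D', h2, hs, rfl⟩) hle
      by_cases hcomp : ∀ x y : V, x ≠ y → G.Adj x y
      · refine ⟨fun w => if w = u then 2 else 0,
          fun v => by show (if v = u then 2 else 0) ≤ 2; split <;> omega,
          solvable_two u (fun v => ?_), ?_⟩
        · rcases eq_or_ne v u with rfl | h
          · exact Or.inl rfl
          · exact Or.inr (hcomp u v h.symm)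
        · have h2 : distSize (fun w => if w = u then 2 else 0) = 2 := by
            simp [distSize]
          omega
      · push_neg at hcomp
        obtain ⟨a, b, hab, hnadj⟩ := hcomp
        by_cases hm3 : optPebbling G = 3
        · have hDu : D u = 3 := le_antisymm (by omega) hu3
          have hzero : ∀ v, v ≠ u → D v = 0 := by
            intro v hv
            have hsum : ∑ x ∈ Finset.univ.erase u, D x + D u = ∑ x, D x :=
              Finset.sum_erase_add _ _ (Finset.mem_univ u)
            have hds : distSize D = ∑ x, D x := rfl
            have h0 : ∑ x ∈ Finset.univ.erase u, D x = 0 := by omega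
            exact Finset.sum_eq_zero_iff.mp h0 v (Finset.mem_erase.mpr ⟨hv, Finset.mem_univ v⟩)
          have hD3 : D = fun w => if w = u then 3 else 0 := by
            funext w
            rcases eq_or_ne w u with rfl | h
            · simp [hDu]
            · simp [h, hzero w h]
          rw [hD3] at hsolv
          have hdom := three_dominates hsolv
          refine ⟨fun w => if w = u then 2 else 0,
            fun v => by show (if v = u then 2 else 0) ≤ 2; split <;> omega,
            solvable_two u hdom, ?_⟩
          have h2 : distSize (fun w => if w = u then 2 else 0) = 2 := by
            simp [distSize]
          omega
        · have hm4 : 4 ≤ optPebbling G := by omega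
          refine ⟨fun w => if w = a then 2 else if w = b then 2 else 0,
            fun v => by
              show (if v = a then 2 else if v = b then 2 else 0) ≤ 2
              split
              · omega
              · split <;> omega,
            solvable_pair hab (fun w => ?_), ?_⟩
          · by_cases hwa : w = a ∨ G.Adj a w
            · exact Or.inl hwa
            by_cases hwb : w = b ∨ G.Adj b w
            · exact Or.inr (Or.inl hwb)
            push_neg at hwa hwb
            exact Or.inr (Or.inr (common_nbr3 G hd hab hnadj hwa.1 hwb.1 hwa.2 hwb.2))
          · have h4 : distSize (fun w => if w = a then 2 else if w = b then 2 else 0) = 4 := by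
              have he : (fun w => if w = a then 2 else if w = b then 2 else 0) =
                  fun w : V => (if w = a then 2 else 0) + (if w = b then 2 else 0) := by
                funext w
                rcases eq_or_ne w a with rfl | h1
                · simp [hab]
                · simp [h1]
              rw [distSize, he, Finset.sum_add_distrib]
              simp
            omega
  · -- `optPebbling G ≤ optPebblingRes G 2`
    obtain ⟨D, h2, hsolv, hsize⟩ :
        ∃ D : V → ℕ, (∀ v, D v ≤ 2) ∧ Solvable G D ∧ distSize D = optPebblingRes G 2 :=
      Nat.sInf_mem hS2ne
    exact Nat.sInf_le ⟨D, hsolv, hsize⟩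
end

section
/- For the graph H_m (m ≥ 4 even), placing 2 pebbles on u₁, 2 pebbles on v₁, and 1 pebble on w is a solvable 2-restricted pebble distribution of size 5; hence π*_2(H_m) ≤ 5. -/
open Finset

/-- The base relation for the graph `H_m`.  Vertices `Sum.inl i` are `u_{i+1}`,
vertices `Sum.inr (Sum.inl i)` are `v_{i+1}`, and `Sum.inr (Sum.inr ())` is `w`
(so 0-based index `i` corresponds to the paper's index `i+1`; the paper's odd
indices are the 0-based even ones). Within each copy of `K_m`, the matching
pairs `{2k, 2k+1}` (0-based) are the removed edges. -/
def HmRel (m : ℕ) : (Fin m ⊕ (Fin m ⊕ Unit)) → (Fin m ⊕ (Fin m ⊕ Unit)) → Prop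
  | .inl i, .inl j => i.val / 2 ≠ j.val / 2
  | .inr (.inl i), .inr (.inl j) => i.val / 2 ≠ j.val / 2
  | .inl i, .inr (.inl j) => i = j ∧ i.val % 2 = 1
  | .inl i, .inr (.inr _) => i.val % 2 = 0
  | .inr (.inl i), .inr (.inr _) => i.val % 2 = 0
  | _, _ => False

/-- The graph `H_m` from the paper. -/
def Hm (m : ℕ) : SimpleGraph (Fin m ⊕ (Fin m ⊕ Unit)) := SimpleGraph.fromRel (HmRel m)

/-- The vertex `w` of `H_m`. -/
def hmW (m : ℕ) : Fin m ⊕ (Fin m ⊕ Unit) := Sum.inr (Sum.inr ())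

lemma reach_step {V : Type*} [DecidableEq V] {G : SimpleGraph V} {D : V → ℕ} {a b : V}
    (h : G.Adj a b) (h2 : 2 ≤ D a) :
    PebblingReaches G D (Function.update (Function.update D a (D a - 2)) b (D b + 1)) :=
  Relation.ReflTransGen.single ⟨a, b, h, h2, rfl⟩

theorem Hm_restricted_le_five (m : ℕ) (hm : 4 ≤ m) (heven : Even m) :
    Solvable (Hm m) (fun x =>
      if x = Sum.inl (⟨0, by omega⟩ : Fin m) then 2
      else if x = Sum.inr (Sum.inl (⟨0, by omega⟩ : Fin m)) then 2
      else if x = hmW m then 1 else 0) ∧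
    (∀ x, (fun x =>
      if x = Sum.inl (⟨0, by omega⟩ : Fin m) then 2
      else if x = Sum.inr (Sum.inl (⟨0, by omega⟩ : Fin m)) then 2
      else if x = hmW m then 1 else 0) x ≤ 2) ∧
    distSize (fun x =>
      if x = Sum.inl (⟨0, by omega⟩ : Fin m) then 2
      else if x = Sum.inr (Sum.inl (⟨0, by omega⟩ : Fin m)) then 2
      else if x = hmW m then 1 else 0) = 5 ∧
    optPebblingRes (Hm m) 2 ≤ 5 := by
  set u0 : Fin m ⊕ (Fin m ⊕ Unit) := Sum.inl (⟨0, by omega⟩ : Fin m) with hu0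
  set v0 : Fin m ⊕ (Fin m ⊕ Unit) := Sum.inr (Sum.inl (⟨0, by omega⟩ : Fin m)) with hv0
  set D : (Fin m ⊕ (Fin m ⊕ Unit)) → ℕ := (fun x =>
      if x = u0 then 2 else if x = v0 then 2 else if x = hmW m then 1 else 0) with hD
  have hsolv : Solvable (Hm m) D := by
    have hw : (hmW m) = Sum.inr (Sum.inr ()) := rfl
    intro x
    rcases x with i | i | u
    · -- u_i
      rcases Nat.lt_or_ge i.val 2 with hi | hi
      · rcases Nat.lt_or_ge i.val 1 with hi0 | hi1
        · -- i = 0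
          refine ⟨D, Relation.ReflTransGen.refl, ?_⟩
          have : Sum.inl i = u0 := by simp [hu0, Fin.ext_iff]; omega
          simp [hD, this]
        · -- i = 1: chain u0→u2, v0→w, w→u2, u2→u1
          have hi1' : i.val = 1 := by omega
          set u2 : Fin m ⊕ (Fin m ⊕ Unit) := Sum.inl (⟨2, by omega⟩ : Fin m) with hu2
          have a1 : (Hm m).Adj u0 u2 := by
            simp [Hm, HmRel, hu0, hu2, Fin.ext_iff]
          have a2 : (Hm m).Adj v0 (hmW m) := by
            simp [Hm, HmRel, hv0, hmW]
          have a3 : (Hm m).Adj (hmW m) u2 := by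
            simp [Hm, HmRel, hu2, hmW]
          have a4 : (Hm m).Adj u2 (Sum.inl i) := by
            simp [Hm, HmRel, hu2, Fin.ext_iff]
            omega
          refine ⟨_, ((((reach_step a1 ?_).trans (reach_step a2 ?_)).trans
            (reach_step a3 ?_)).trans (reach_step a4 ?_)), ?_⟩
          · simp [hD]
          · simp [hD, Function.update_apply, hu0, hv0, hu2, hmW, hw, Fin.ext_iff]
          · simp [hD, Function.update_apply, hu0, hv0, hu2, hmW, hw, Fin.ext_iff]
          · simp [hD, Function.update_apply, hu0, hv0, hu2, hmW, hw, Fin.ext_iff]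
          · simp [hD, Function.update_apply, hu0, hv0, hu2, hmW, hw, Fin.ext_iff]
      · -- i ≥ 2: single move u0 → u_i
        have a1 : (Hm m).Adj u0 (Sum.inl i) := by
          simp [Hm, HmRel, hu0, Fin.ext_iff]
          omega
        refine ⟨_, reach_step a1 (by simp [hD]), ?_⟩
        simp [Function.update_apply]
    · -- v_i
      rcases Nat.lt_or_ge i.val 2 with hi | hi
      · rcases Nat.lt_or_ge i.val 1 with hi0 | hi1
        · refine ⟨D, Relation.ReflTransGen.refl, ?_⟩
          have : Sum.inr (Sum.inl i) = v0 := by simp [hv0, Fin.ext_iff]; omega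
          simp [hD, this, hu0]
        · have hi1' : i.val = 1 := by omega
          set v2 : Fin m ⊕ (Fin m ⊕ Unit) := Sum.inr (Sum.inl (⟨2, by omega⟩ : Fin m)) with hv2
          have a1 : (Hm m).Adj v0 v2 := by
            simp [Hm, HmRel, hv0, hv2, Fin.ext_iff]
          have a2 : (Hm m).Adj u0 (hmW m) := by
            simp [Hm, HmRel, hu0, hmW]
          have a3 : (Hm m).Adj (hmW m) v2 := by
            simp [Hm, HmRel, hv2, hmW]
          have a4 : (Hm m).Adj v2 (Sum.inr (Sum.inl i)) := by
            simp [Hm, HmRel, hv2, Fin.ext_iff]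
            omega
          refine ⟨_, ((((reach_step a1 ?_).trans (reach_step a2 ?_)).trans
            (reach_step a3 ?_)).trans (reach_step a4 ?_)), ?_⟩
          · simp [hD, hu0, hv0, Fin.ext_iff]
          · simp [hD, Function.update_apply, hu0, hv0, hv2, hmW, hw, Fin.ext_iff]
          · simp [hD, Function.update_apply, hu0, hv0, hv2, hmW, hw, Fin.ext_iff]
          · simp [hD, Function.update_apply, hu0, hv0, hv2, hmW, hw, Fin.ext_iff]
          · simp [hD, Function.update_apply, hu0, hv0, hv2, hmW, hw, Fin.ext_iff]
      · have a1 : (Hm m).Adj v0 (Sum.inr (Sum.inl i)) := by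
          simp [Hm, HmRel, hv0, Fin.ext_iff]
          omega
        refine ⟨_, reach_step a1 (by simp [hD, hu0, hv0, Fin.ext_iff]), ?_⟩
        simp [Function.update_apply]
    · -- w
      refine ⟨D, Relation.ReflTransGen.refl, ?_⟩
      simp [hD, hmW, hu0, hv0]
  have hbound : ∀ x, D x ≤ 2 := by
    intro x
    simp only [hD]
    split <;> [skip; split <;> [skip; split]] <;> omega
  have hsize : distSize D = 5 := by
    simp only [distSize, hD, hu0, hv0, hmW, Fintype.sum_sum_type]
    simp [Finset.sum_ite_eq', Sum.inl.injEq, Sum.inr.injEq]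
  refine ⟨hsolv, hbound, hsize, ?_⟩
  exact Nat.sInf_le ⟨D, hbound, hsolv, hsize⟩
end

section
/- For the graph H_m (m ≥ 4 even), π*_2(H_m) ≥ 5; combined with the upper bound, π*_2(H_m) = 5. -/
open Finset

section Generic
variable {V : Type*} [Fintype V] [DecidableEq V] {G : SimpleGraph V} {D : V → ℕ}

def Cond (G : SimpleGraph V) (D : V → ℕ) (t : V) : Prop :=
  1 ≤ D t
  ∨ (∃ u, G.Adj t u ∧ 2 ≤ D u)
  ∨ (∃ u x, G.Adj t u ∧ G.Adj u x ∧ 1 ≤ D u ∧ 2 ≤ D x)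
  ∨ (∃ u x y, G.Adj t u ∧ G.Adj u x ∧ G.Adj x y ∧ 1 ≤ D u ∧ 1 ≤ D x ∧ 2 ≤ D y)
  ∨ (∃ u x y, G.Adj t u ∧ G.Adj u x ∧ G.Adj u y ∧ x ≠ y ∧ 2 ≤ D x ∧ 2 ≤ D y)
  ∨ (∃ u x, G.Adj t u ∧ G.Adj u x ∧ 4 ≤ D x)

lemma sum2' {a b : V} (h1 : a ≠ b) : D a + D b ≤ ∑ v, D v := by
  classical
  have hsub : ({a, b} : Finset V) ⊆ Finset.univ := by intro x _; exact Finset.mem_univ x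
  have := Finset.sum_le_sum_of_subset (f := D) hsub
  rw [Finset.sum_insert (by simp [h1]), Finset.sum_singleton] at this
  omega

lemma sum3' {a b c : V} (h1 : a ≠ b) (h2 : a ≠ c) (h3 : b ≠ c) :
    D a + D b + D c ≤ ∑ v, D v := by
  classical
  have hsub : ({a, b, c} : Finset V) ⊆ Finset.univ := by intro x _; exact Finset.mem_univ x
  have := Finset.sum_le_sum_of_subset (f := D) hsub
  rw [Finset.sum_insert (by simp [h1, h2]), Finset.sum_insert (by simp [h3]),
    Finset.sum_singleton] at this
  omega

lemma sum4' {a b c d : V} (h1 : a ≠ b) (h2 : a ≠ c) (h3 : a ≠ d) (h4 : b ≠ c) (h5 : b ≠ d)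
    (h6 : c ≠ d) : D a + D b + D c + D d ≤ ∑ v, D v := by
  classical
  have hsub : ({a, b, c, d} : Finset V) ⊆ Finset.univ := by intro x _; exact Finset.mem_univ x
  have := Finset.sum_le_sum_of_subset (f := D) hsub
  rw [Finset.sum_insert (by simp [h1, h2, h3]), Finset.sum_insert (by simp [h4, h5]),
    Finset.sum_insert (by simp [h6]), Finset.sum_singleton] at this
  omega

lemma sum5' {a b c d e : V} (h1 : a ≠ b) (h2 : a ≠ c) (h3 : a ≠ d) (h4 : a ≠ e) (h5 : b ≠ c)
    (h6 : b ≠ d) (h7 : b ≠ e) (h8 : c ≠ d) (h9 : c ≠ e) (h10 : d ≠ e) :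
    D a + D b + D c + D d + D e ≤ ∑ v, D v := by
  classical
  have hsub : ({a, b, c, d, e} : Finset V) ⊆ Finset.univ := by intro x _; exact Finset.mem_univ x
  have := Finset.sum_le_sum_of_subset (f := D) hsub
  rw [Finset.sum_insert (by simp [h1, h2, h3, h4]), Finset.sum_insert (by simp [h5, h6, h7]),
    Finset.sum_insert (by simp [h8, h9]), Finset.sum_insert (by simp [h10]),
    Finset.sum_singleton] at this
  omega

lemma step_sum {D D' : V → ℕ} (h : PebblingStep G D D') : ∑ v, D' v + 1 = ∑ v, D v := by
  classical
  obtain ⟨a, b, hadj, h2, rfl⟩ := h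
  have hab : a ≠ b := hadj.ne
  rw [Finset.sum_update_of_mem (Finset.mem_univ b)]
  rw [Finset.sum_update_of_mem (by simp [hab] : a ∈ Finset.univ \ {b})]
  have e1 : ∑ v, D v = ∑ x ∈ Finset.univ \ {b}, D x + D b :=
    Finset.sum_eq_sum_sdiff_singleton_add (Finset.mem_univ b) D
  have e2 : ∑ x ∈ Finset.univ \ {b}, D x
      = ∑ x ∈ (Finset.univ \ {b}) \ {a}, D x + D a :=
    Finset.sum_eq_sum_sdiff_singleton_add (by simp [hab]) D
  omega

end Generic

section Closure
variable {V : Type*} [Fintype V] [DecidableEq V] {G : SimpleGraph V} {D : V → ℕ}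

lemma cond_step {D D' : V → ℕ} (hsum : ∑ v, D v ≤ 4) (hstep : PebblingStep G D D')
    {t : V} (h : Cond G D' t) : Cond G D t := by
  classical
  obtain ⟨a, b, hadj, h2, rfl⟩ := hstep
  have hab : a ≠ b := hadj.ne
  set E : V → ℕ := Function.update (Function.update D a (D a - 2)) b (D b + 1) with hE
  have hEb : E b = D b + 1 := by simp [hE, Function.update]
  have hEa : E a = D a - 2 := by
    simp [hE, Function.update_of_ne hab, Function.update_self]
  have hEz : ∀ z, z ≠ a → z ≠ b → E z = D z := by
    intro z hza hzb
    simp [hE, Function.update_of_ne hzb, Function.update_of_ne hza]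
  have hvb : ∀ z, z = b → E z = D z + 1 := fun z hz => by rw [hz, hEb]
  have hva : ∀ z, z = a → E z = D z - 2 := fun z hz => by rw [hz, hEa]
  have h2' : ∀ z, z = a → 2 ≤ D z := fun z hz => by rw [hz]; exact h2
  have hba : ∀ z, z = b → G.Adj z a := fun z hz => by rw [hz]; exact hadj.symm
  -- generic conversion facts
  rcases h with h1 | ⟨u, htu, hu⟩ | ⟨u, x, htu, hux, hu1, hx2⟩ |
    ⟨u, x, y, htu, hux, hxy, hu1, hx1, hy2⟩ | ⟨u, x, y, htu, hux, huy, hxy, hx2, hy2⟩ |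
    ⟨u, x, htu, hux, hx4⟩
  · -- (A)
    by_cases htb : t = b
    · rcases Nat.lt_or_ge (D t) 1 with h0 | h0
      · exact Or.inr (Or.inl ⟨a, hba t htb, h2⟩)
      · exact Or.inl h0
    · by_cases hta : t = a
      · exact Or.inl (by have := h2' t hta; omega)
      · rw [hEz t hta htb] at h1; exact Or.inl h1
  · -- (B)
    by_cases hub : u = b
    · rw [hvb u hub] at hu
      rcases Nat.lt_or_ge (D u) 2 with h0 | h0
      · exact Or.inr (Or.inr (Or.inl ⟨u, a, htu, hba u hub, by omega, h2⟩))
      · exact Or.inr (Or.inl ⟨u, htu, h0⟩)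
    · by_cases hua : u = a
      · exact Or.inr (Or.inl ⟨u, htu, h2' u hua⟩)
      · rw [hEz u hua hub] at hu; exact Or.inr (Or.inl ⟨u, htu, hu⟩)
  · -- (C)
    by_cases hub : u = b
    · rw [hvb u hub] at hu1
      rcases Nat.lt_or_ge (D u) 1 with h0 | h0
      · -- D u = 0
        by_cases hxa : x = a
        · rw [hva x hxa] at hx2
          have := h2' x hxa
          exact Or.inr (Or.inr (Or.inr (Or.inr (Or.inr ⟨u, x, htu, hux, by omega⟩))))
        · have hxb : x ≠ b := fun hh => hux.ne' (hh.trans hub.symm)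
          rw [hEz x hxa hxb] at hx2
          exact Or.inr (Or.inr (Or.inr (Or.inr (Or.inl
            ⟨u, x, a, htu, hux, hba u hub, hxa, hx2, h2⟩))))
      · rcases Nat.lt_or_ge (D u) 2 with h1 | h1
        · exact Or.inr (Or.inr (Or.inl ⟨u, a, htu, hba u hub, h0, h2⟩))
        · exact Or.inr (Or.inl ⟨u, htu, h1⟩)
    · have hu1' : 1 ≤ D u := by
        by_cases hua : u = a
        · have := h2' u hua; omega
        · rw [hEz u hua hub] at hu1; exact hu1
      by_cases hxb : x = b
      · rw [hvb x hxb] at hx2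
        exact Or.inr (Or.inr (Or.inr (Or.inl
          ⟨u, x, a, htu, hux, hba x hxb, hu1', by omega, h2⟩)))
      · by_cases hxa : x = a
        · exact Or.inr (Or.inr (Or.inl ⟨u, x, htu, hux, hu1', h2' x hxa⟩))
        · rw [hEz x hxa hxb] at hx2
          exact Or.inr (Or.inr (Or.inl ⟨u, x, htu, hux, hu1', hx2⟩))
  · -- (D)
    by_cases hub : u = b
    · rw [hvb u hub] at hu1
      by_cases hyb : y = b
      · rw [hvb y hyb] at hy2
        have hyu : D y = D u := by rw [hyb, hub]
        rcases Nat.lt_or_ge (D u) 2 with h0 | h0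
        · exact Or.inr (Or.inr (Or.inl ⟨u, a, htu, hba u hub, by omega, h2⟩))
        · exact Or.inr (Or.inl ⟨u, htu, h0⟩)
      · rcases Nat.lt_or_ge (D u) 1 with h0 | h0
        · -- D u = 0
          by_cases hxa : x = a
          · rw [hva x hxa] at hx1
            have hx2' := h2' x hxa
            have hyx : y ≠ x := hxy.ne'
            rw [hEz y (fun hh => hyx (hh.trans hxa.symm)) hyb] at hy2
            have := sum2' (D := D) (hxy.ne)
            omega
          · have hxb : x ≠ b := fun hh => hux.ne' (hh.trans hub.symm)
            rw [hEz x hxa hxb] at hx1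
            by_cases hya : y = a
            · rw [hva y hya] at hy2
              have := h2' y hya
              exact Or.inr (Or.inr (Or.inr (Or.inr (Or.inr ⟨u, y, htu,
                by rw [hub, hya]; exact hadj.symm, by omega⟩))))
            · rw [hEz y hya hyb] at hy2
              have hax : a ≠ x := fun hh => hxa hh.symm
              have hay : a ≠ y := fun hh => hya hh.symm
              have := sum3' (D := D) hax hay hxy.ne
              omega
        · have hx1' : 1 ≤ D x := by
            have hxb : x ≠ b := fun hh => hux.ne' (hh.trans hub.symm)
            by_cases hxa : x = a
            · have := h2' x hxa; omega
            · rw [hEz x hxa hxb] at hx1; exact hx1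
          have hy2' : 2 ≤ D y := by
            by_cases hya : y = a
            · exact h2' y hya
            · rw [hEz y hya hyb] at hy2; exact hy2
          exact Or.inr (Or.inr (Or.inr (Or.inl ⟨u, x, y, htu, hux, hxy, h0, hx1', hy2'⟩)))
    · have hu1' : 1 ≤ D u := by
        by_cases hua : u = a
        · have := h2' u hua; omega
        · rw [hEz u hua hub] at hu1; exact hu1
      by_cases hxb : x = b
      · rw [hvb x hxb] at hx1
        have hyb : y ≠ b := fun hh => hxy.ne' (hh.trans hxb.symm)
        rcases Nat.lt_or_ge (D x) 1 with h0 | h0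
        · -- D x = 0 (x = b)
          by_cases hua : u = a
          · exact Or.inr (Or.inl ⟨u, htu, h2' u hua⟩)
          · by_cases hya : y = a
            · rw [hva y hya] at hy2
              have h4 : 4 ≤ D y := by omega
              have hyu : y ≠ u := fun hh => hua (hh.symm.trans hya)
              have := sum2' (D := D) hyu
              omega
            · rw [hEz y hya hyb] at hy2
              by_cases huy : u = y
              · exact Or.inr (Or.inl ⟨u, htu, by rw [huy]; exact hy2⟩)
              · have hau : a ≠ u := fun hh => hua hh.symm
                have hay : a ≠ y := fun hh => hya hh.symm
                have := sum3' (D := D) hau hay huy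
                omega
        · have hy2' : 2 ≤ D y := by
            by_cases hya : y = a
            · exact h2' y hya
            · rw [hEz y hya hyb] at hy2; exact hy2
          exact Or.inr (Or.inr (Or.inr (Or.inl ⟨u, x, y, htu, hux, hxy, hu1', h0, hy2'⟩)))
      · have hx1' : 1 ≤ D x := by
          by_cases hxa : x = a
          · have := h2' x hxa; omega
          · rw [hEz x hxa hxb] at hx1; exact hx1
        by_cases hyb : y = b
        · rw [hvb y hyb] at hy2
          rcases Nat.lt_or_ge (D y) 2 with h0 | h0
          · -- D y = 1 (y = b)
            by_cases hua : u = a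
            · exact Or.inr (Or.inl ⟨u, htu, h2' u hua⟩)
            · by_cases hxa : x = a
              · exact Or.inr (Or.inr (Or.inl ⟨u, x, htu, hux, hu1', h2' x hxa⟩))
              · have hau : a ≠ u := fun hh => hua hh.symm
                have hax : a ≠ x := fun hh => hxa hh.symm
                have hay : a ≠ y := fun hh => hab (hh.trans hyb)
                have hub' : u ≠ y := fun hh => hub (hh.trans hyb)
                have hxy' : x ≠ y := hxy.ne
                have := sum4' (D := D) hau hax hay hux.ne hub' hxy'
                omega
          · exact Or.inr (Or.inr (Or.inr (Or.inl ⟨u, x, y, htu, hux, hxy, hu1', hx1', h0⟩)))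
        · have hy2' : 2 ≤ D y := by
            by_cases hya : y = a
            · exact h2' y hya
            · rw [hEz y hya hyb] at hy2; exact hy2
          exact Or.inr (Or.inr (Or.inr (Or.inl ⟨u, x, y, htu, hux, hxy, hu1', hx1', hy2'⟩)))
  · -- (E)
    by_cases hxa : x = a
    · rw [hva x hxa] at hx2
      have := h2' x hxa
      exact Or.inr (Or.inr (Or.inr (Or.inr (Or.inr ⟨u, x, htu, hux, by omega⟩))))
    · by_cases hya : y = a
      · rw [hva y hya] at hy2
        have := h2' y hya
        exact Or.inr (Or.inr (Or.inr (Or.inr (Or.inr ⟨u, y, htu, huy, by omega⟩))))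
      · by_cases hxb : x = b
        · rw [hvb x hxb] at hx2
          have hyb : y ≠ b := fun hh => hxy (hxb.trans hh.symm)
          rw [hEz y hya hyb] at hy2
          rcases Nat.lt_or_ge (D x) 2 with h0 | h0
          · by_cases hua : u = a
            · exact Or.inr (Or.inl ⟨u, htu, h2' u hua⟩)
            · rcases Nat.lt_or_ge (D u) 1 with hu0 | hu0
              · have hax : a ≠ x := fun hh => hxa hh.symm
                have hay : a ≠ y := fun hh => hya hh.symm
                have := sum3' (D := D) hax hay hxy
                omega
              · exact Or.inr (Or.inr (Or.inr (Or.inl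
                  ⟨u, x, a, htu, hux, hba x hxb, hu0, by omega, h2⟩)))
          · exact Or.inr (Or.inr (Or.inr (Or.inr (Or.inl ⟨u, x, y, htu, hux, huy, hxy, h0, hy2⟩))))
        · by_cases hyb : y = b
          · rw [hvb y hyb] at hy2
            rw [hEz x hxa hxb] at hx2
            rcases Nat.lt_or_ge (D y) 2 with h0 | h0
            · by_cases hua : u = a
              · exact Or.inr (Or.inl ⟨u, htu, h2' u hua⟩)
              · rcases Nat.lt_or_ge (D u) 1 with hu0 | hu0
                · have hax : a ≠ x := fun hh => hxa hh.symm
                  have hay : a ≠ y := fun hh => hya hh.symm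
                  have hyx : y ≠ x := fun hh => hxy hh.symm
                  have := sum3' (D := D) hay hax hyx
                  omega
                · exact Or.inr (Or.inr (Or.inr (Or.inl
                    ⟨u, y, a, htu, huy, hba y hyb, hu0, by omega, h2⟩)))
            · exact Or.inr (Or.inr (Or.inr (Or.inr (Or.inl
                ⟨u, y, x, htu, huy, hux, fun hh => hxy hh.symm, h0, hx2⟩))))
          · rw [hEz x hxa hxb] at hx2
            rw [hEz y hya hyb] at hy2
            exact Or.inr (Or.inr (Or.inr (Or.inr (Or.inl ⟨u, x, y, htu, hux, huy, hxy, hx2, hy2⟩))))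
  · -- (F)
    by_cases hxa : x = a
    · rw [hva x hxa] at hx4
      exact Or.inr (Or.inr (Or.inr (Or.inr (Or.inr ⟨u, x, htu, hux, by omega⟩))))
    · by_cases hxb : x = b
      · rw [hvb x hxb] at hx4
        have hax : a ≠ x := fun hh => hxa hh.symm
        have := sum2' (D := D) hax
        omega
      · rw [hEz x hxa hxb] at hx4
        exact Or.inr (Or.inr (Or.inr (Or.inr (Or.inr ⟨u, x, htu, hux, hx4⟩))))

lemma reach_cond {t : V} (hsum : ∑ v, D v ≤ 4) (h : KReachable G D 1 t) : Cond G D t := by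
  obtain ⟨D', hr, h1⟩ := h
  unfold PebblingReaches at hr
  revert hsum
  induction hr using Relation.ReflTransGen.head_induction_on with
  | refl => intro _; exact Or.inl h1
  | head hstep htail ih =>
    intro hsum
    have h1' := step_sum (G := G) hstep
    exact cond_step hsum hstep (ih (by omega))

end Closure

section HmPart
variable {m : ℕ}

abbrev HVx (m : ℕ) := Fin m ⊕ (Fin m ⊕ Unit)

@[simp] lemma hm_adj_uu {i j : Fin m} :
    (Hm m).Adj (Sum.inl i) (Sum.inl j) ↔ (i : ℕ) / 2 ≠ (j : ℕ) / 2 := by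
  simp [Hm, SimpleGraph.fromRel_adj, HmRel, Fin.ext_iff]
  omega

@[simp] lemma hm_adj_vv {i j : Fin m} :
    (Hm m).Adj (Sum.inr (Sum.inl i)) (Sum.inr (Sum.inl j)) ↔ (i : ℕ) / 2 ≠ (j : ℕ) / 2 := by
  simp [Hm, SimpleGraph.fromRel_adj, HmRel, Fin.ext_iff]
  omega

@[simp] lemma hm_adj_uv {i j : Fin m} :
    (Hm m).Adj (Sum.inl i) (Sum.inr (Sum.inl j)) ↔ (i : ℕ) = (j : ℕ) ∧ (i : ℕ) % 2 = 1 := by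
  simp [Hm, SimpleGraph.fromRel_adj, HmRel, Fin.ext_iff]

@[simp] lemma hm_adj_vu {i j : Fin m} :
    (Hm m).Adj (Sum.inr (Sum.inl i)) (Sum.inl j) ↔ (j : ℕ) = (i : ℕ) ∧ (j : ℕ) % 2 = 1 := by
  rw [SimpleGraph.adj_comm]; exact hm_adj_uv

@[simp] lemma hm_adj_uw {i : Fin m} {u : Unit} :
    (Hm m).Adj (Sum.inl i) (Sum.inr (Sum.inr u)) ↔ (i : ℕ) % 2 = 0 := by
  simp [Hm, SimpleGraph.fromRel_adj, HmRel]

@[simp] lemma hm_adj_wu {i : Fin m} {u : Unit} :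
    (Hm m).Adj (Sum.inr (Sum.inr u)) (Sum.inl i) ↔ (i : ℕ) % 2 = 0 := by
  rw [SimpleGraph.adj_comm]; exact hm_adj_uw

@[simp] lemma hm_adj_vw {i : Fin m} {u : Unit} :
    (Hm m).Adj (Sum.inr (Sum.inl i)) (Sum.inr (Sum.inr u)) ↔ (i : ℕ) % 2 = 0 := by
  simp [Hm, SimpleGraph.fromRel_adj, HmRel]

@[simp] lemma hm_adj_wv {i : Fin m} {u : Unit} :
    (Hm m).Adj (Sum.inr (Sum.inr u)) (Sum.inr (Sum.inl i)) ↔ (i : ℕ) % 2 = 0 := by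
  rw [SimpleGraph.adj_comm]; exact hm_adj_vw

@[simp] lemma hm_adj_ww {u u' : Unit} :
    ¬ (Hm m).Adj (Sum.inr (Sum.inr u)) (Sum.inr (Sum.inr u')) := by
  simp [Hm, SimpleGraph.fromRel_adj, HmRel]

def swp : HVx m → HVx m
  | .inl i => .inr (.inl i)
  | .inr (.inl i) => .inl i
  | .inr (.inr u) => .inr (.inr u)

@[simp] lemma swp_swp (x : HVx m) : swp (swp x) = x := by
  rcases x with i | (i | u) <;> rfl

lemma swp_inj {x y : HVx m} (h : swp x = swp y) : x = y := by
  have := congrArg swp h; simpa using this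

lemma swp_adj {x y : HVx m} : (Hm m).Adj (swp x) (swp y) ↔ (Hm m).Adj x y := by
  rcases x with i | (i | u) <;> rcases y with j | (j | u') <;>
    simp [swp] <;> omega

end HmPart

section NotCond
variable {V : Type*} [Fintype V] [DecidableEq V] {G : SimpleGraph V} {D : V → ℕ}

/-- Selection property for the case of one doubled vertex `c` and singles `a`, `b`. -/
def Sel1 (G : SimpleGraph V) (c a b t : V) : Prop :=
  t ≠ c ∧ t ≠ a ∧ t ≠ b ∧ ¬G.Adj t c ∧
    (¬G.Adj t a ∨ (¬G.Adj a c ∧ (¬G.Adj a b ∨ ¬G.Adj b c))) ∧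
    (¬G.Adj t b ∨ (¬G.Adj b c ∧ (¬G.Adj b a ∨ ¬G.Adj a c)))

/-- Selection property for the case of two doubled vertices. -/
def Sel2 (G : SimpleGraph V) (c d t : V) : Prop :=
  t ≠ c ∧ t ≠ d ∧ ¬G.Adj t c ∧ ¬G.Adj t d ∧
    ∀ u, G.Adj t u → ¬(G.Adj u c ∧ G.Adj u d)

lemma sel1_symm {c a b t : V} (h : Sel1 G c a b t) : Sel1 G c b a t := by
  obtain ⟨h1, h2, h3, h4, h5, h6⟩ := h
  exact ⟨h1, h3, h2, h4, h6, h5⟩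

lemma notCond_no_double {t : V} (hone : ∀ v, D v ≤ 1) (ht : D t = 0) : ¬ Cond G D t := by
  rintro (h | ⟨u, -, hu⟩ | ⟨u, x, -, -, -, hx⟩ | ⟨u, x, y, -, -, -, -, -, hy⟩ |
    ⟨u, x, y, -, -, -, -, hx, -⟩ | ⟨u, x, -, -, hx⟩)
  · omega
  · have := hone u; omega
  · have := hone x; omega
  · have := hone y; omega
  · have := hone x; omega
  · have := hone x; omega

lemma notCond_one_double {c a b t : V} (hcap : ∀ v, D v ≤ 2) (hone : ∀ v, v ≠ c → D v ≤ 1)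
    (hz : ∀ v, v ≠ c → v ≠ a → v ≠ b → D v = 0) (ht : D t = 0)
    (hsel : Sel1 G c a b t) : ¬ Cond G D t := by
  obtain ⟨-, -, -, htc, hA, hB⟩ := hsel
  have hdd : ∀ z, 2 ≤ D z → z = c := by
    intro z hzz
    by_contra hzc
    have := hone z hzc; omega
  have hpeb : ∀ z, 1 ≤ D z → z = c ∨ z = a ∨ z = b := by
    intro z hzz
    by_contra hh
    push_neg at hh
    have := hz z hh.1 hh.2.1 hh.2.2; omega
  rintro (h | ⟨u, htu, hu⟩ | ⟨u, x, htu, hux, hu1, hx2⟩ |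
    ⟨u, x, y, htu, hux, hxy, hu1, hx1, hy2⟩ | ⟨u, x, y, htu, hux, huy, hxy, hx2, hy2⟩ |
    ⟨u, x, htu, hux, hx4⟩)
  · omega
  · exact htc ((hdd u hu) ▸ htu)
  · -- chain t-u-x with x doubled
    have hxc := hdd x hx2
    subst hxc
    have huc : u ≠ x := fun hh => htc (hh ▸ htu)
    rcases hpeb u (by omega) with h' | h' | h'
    · exact huc h'
    · subst h'
      rcases hA with h'' | ⟨h'', -⟩
      · exact h'' htu
      · exact h'' hux
    · subst h'
      rcases hB with h'' | ⟨h'', -⟩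
      · exact h'' htu
      · exact h'' hux
  · -- chain t-u-x-y with y doubled
    have hyc := hdd y hy2
    subst hyc
    have huc : u ≠ y := fun hh => htc (hh ▸ htu)
    have hxc : x ≠ y := hxy.ne
    rcases hpeb u (by omega) with h' | h' | h'
    · exact huc h'
    · -- u = a
      subst h'
      rcases hA with h'' | ⟨huc2, hA2⟩
      · exact h'' htu
      · rcases hpeb x (by omega) with h3 | h3 | h3
        · exact hxc h3
        · subst h3; exact (hux.ne rfl).elim
        · subst h3
          rcases hA2 with h4 | h4
          · exact h4 hux
          · exact h4 hxy
    · -- u = b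
      subst h'
      rcases hB with h'' | ⟨huc2, hB2⟩
      · exact h'' htu
      · rcases hpeb x (by omega) with h3 | h3 | h3
        · exact hxc h3
        · subst h3
          rcases hB2 with h4 | h4
          · exact h4 hux
          · exact h4 hxy
        · subst h3; exact (hux.ne rfl).elim
  · -- two doubles
    exact hxy ((hdd x hx2).trans (hdd y hy2).symm)
  · have := hcap x; omega

lemma notCond_two_doubles {c d t : V} (hcap : ∀ v, D v ≤ 2)
    (hz : ∀ v, v ≠ c → v ≠ d → D v = 0) (ht : D t = 0)
    (hsel : Sel2 G c d t) : ¬ Cond G D t := by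
  obtain ⟨-, -, htc, htd, hcom⟩ := hsel
  have hpeb : ∀ z, 1 ≤ D z → z = c ∨ z = d := by
    intro z hzz
    by_contra hh
    push_neg at hh
    have := hz z hh.1 hh.2; omega
  have hnt : ∀ z, G.Adj t z → 1 ≤ D z → False := by
    intro z hza hzz
    rcases hpeb z hzz with h | h
    · exact htc (h ▸ hza)
    · exact htd (h ▸ hza)
  rintro (h | ⟨u, htu, hu⟩ | ⟨u, x, htu, hux, hu1, hx2⟩ |
    ⟨u, x, y, htu, hux, hxy, hu1, hx1, hy2⟩ | ⟨u, x, y, htu, hux, huy, hxy, hx2, hy2⟩ |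
    ⟨u, x, htu, hux, hx4⟩)
  · omega
  · exact hnt u htu (by omega)
  · exact hnt u htu hu1
  · exact hnt u htu hu1
  · -- two doubles adjacent to a common neighbour of t
    rcases hpeb x (by omega) with h1 | h1 <;> rcases hpeb y (by omega) with h2 | h2
    · exact hxy (h1.trans h2.symm)
    · exact hcom u htu ⟨h1 ▸ hux, h2 ▸ huy⟩
    · exact hcom u htu ⟨h2 ▸ huy, h1 ▸ hux⟩
    · exact hxy (h1.trans h2.symm)
  · have := hcap x; omega

end NotCond

section Sel2Exists
variable {m : ℕ}

lemma sel2_symm {V : Type*} [Fintype V] [DecidableEq V] {G : SimpleGraph V} {c d t : V}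
    (h : Sel2 G c d t) : Sel2 G d c t := by
  obtain ⟨h1, h2, h3, h4, h5⟩ := h
  exact ⟨h2, h1, h4, h3, fun u hu hcd => h5 u hu ⟨hcd.2, hcd.1⟩⟩

lemma sel2_swp {c d t : HVx m} (h : Sel2 (Hm m) c d t) :
    Sel2 (Hm m) (swp c) (swp d) (swp t) := by
  obtain ⟨h1, h2, h3, h4, h5⟩ := h
  refine ⟨fun hh => h1 (swp_inj hh), fun hh => h2 (swp_inj hh),
    fun hh => h3 (swp_adj.mp hh), fun hh => h4 (swp_adj.mp hh), ?_⟩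
  intro u hu hcd
  have hu' : (Hm m).Adj (swp t) (swp (swp u)) := by rwa [swp_swp]
  refine h5 (swp u) (swp_adj.mp hu') ⟨?_, ?_⟩
  · have := swp_adj.mpr hcd.1
    rwa [swp_swp] at this
  · have := swp_adj.mpr hcd.2
    rwa [swp_swp] at this

lemma sel2_uu_aux (hm : 4 ≤ m) (hme : Even m) (s s' : Fin m) (hss : s ≠ s')
    (h0 : (s : ℕ) % 2 = 0) : ∃ t, Sel2 (Hm m) (Sum.inl s) (Sum.inl s') t := by
  obtain ⟨r, hr⟩ := hme
  have hsv := s.isLt; have hsv' := s'.isLt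
  have hne : (s : ℕ) ≠ (s' : ℕ) := fun hh => hss (Fin.ext hh)
  by_cases hblk : (s' : ℕ) / 2 = (s : ℕ) / 2
  · -- same block: t = v_s
    refine ⟨Sum.inr (Sum.inl s), by simp, by simp, by simp [Fin.ext_iff] <;> omega, by simp [Fin.ext_iff] <;> omega, ?_⟩
    rintro u htu ⟨hc, hd⟩
    rcases u with j | (j | un) <;> simp at htu hc hd <;> omega
  · -- different block: t = v_{s+1}
    refine ⟨Sum.inr (Sum.inl ⟨(s : ℕ) + 1, by omega⟩), by simp, by simp,
      by simp [Fin.ext_iff] <;> omega, by simp [Fin.ext_iff] <;> omega, ?_⟩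
    rintro u htu ⟨hc, hd⟩
    rcases u with j | (j | un) <;> simp at htu hc hd <;> omega

lemma sel2_uu (hm : 4 ≤ m) (hme : Even m) (s s' : Fin m) (hss : s ≠ s') :
    ∃ t, Sel2 (Hm m) (Sum.inl s) (Sum.inl s') t := by
  have hne : (s : ℕ) ≠ (s' : ℕ) := fun hh => hss (Fin.ext hh)
  by_cases h0 : (s : ℕ) % 2 = 0
  · exact sel2_uu_aux hm hme s s' hss h0
  · by_cases h1 : (s' : ℕ) % 2 = 0
    · obtain ⟨t, ht⟩ := sel2_uu_aux hm hme s' s hss.symm h1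
      exact ⟨t, sel2_symm ht⟩
    · -- both odd : t = v_{s-1}
      have hsv := s.isLt
      refine ⟨Sum.inr (Sum.inl ⟨(s : ℕ) - 1, by omega⟩), by simp, by simp,
        by simp [Fin.ext_iff] <;> omega, by simp [Fin.ext_iff] <;> omega, ?_⟩
      rintro u htu ⟨hc, hd⟩
      rcases u with j | (j | un) <;> simp at htu hc hd <;> omega

lemma sel2_uv (hm : 4 ≤ m) (hme : Even m) (s s' : Fin m) :
    ∃ t, Sel2 (Hm m) (Sum.inl s) (Sum.inr (Sum.inl s')) t := by
  obtain ⟨r, hr⟩ := hme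
  have hsv := s.isLt; have hsv' := s'.isLt
  by_cases h1 : (s' : ℕ) % 2 = 0
  · -- t = u_{partner s}
    by_cases h0 : (s : ℕ) % 2 = 0
    · refine ⟨Sum.inl ⟨(s : ℕ) + 1, by omega⟩, by simp [Fin.ext_iff] <;> omega, by simp,
        by simp [Fin.ext_iff] <;> omega, by simp [Fin.ext_iff] <;> omega, ?_⟩
      rintro u htu ⟨hc, hd⟩
      rcases u with j | (j | un) <;> simp at htu hc hd <;> omega
    · refine ⟨Sum.inl ⟨(s : ℕ) - 1, by omega⟩, by simp [Fin.ext_iff] <;> omega, by simp,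
        by simp [Fin.ext_iff] <;> omega, by simp [Fin.ext_iff] <;> omega, ?_⟩
      rintro u htu ⟨hc, hd⟩
      rcases u with j | (j | un) <;> simp at htu hc hd <;> omega
  · by_cases h0 : (s : ℕ) % 2 = 0
    · -- s even, s' odd : t = v_{s'-1}
      refine ⟨Sum.inr (Sum.inl ⟨(s' : ℕ) - 1, by omega⟩), by simp, by simp [Fin.ext_iff] <;> omega,
        by simp [Fin.ext_iff] <;> omega, by simp [Fin.ext_iff] <;> omega, ?_⟩
      rintro u htu ⟨hc, hd⟩
      rcases u with j | (j | un) <;> simp at htu hc hd <;> omega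
    · -- both odd : t = w
      refine ⟨Sum.inr (Sum.inr ()), by simp, by simp, by simp [Fin.ext_iff] <;> omega,
        by simp [Fin.ext_iff] <;> omega, ?_⟩
      rintro u htu ⟨hc, hd⟩
      rcases u with j | (j | un) <;> simp at htu hc hd <;> omega

lemma sel2_uw (hm : 4 ≤ m) (hme : Even m) (s : Fin m) (un : Unit) :
    ∃ t, Sel2 (Hm m) (Sum.inl s) (Sum.inr (Sum.inr un)) t := by
  have hsv := s.isLt
  by_cases h1 : (s : ℕ) = 1
  · refine ⟨Sum.inr (Sum.inl ⟨3, by omega⟩), by simp, by simp, by simp [Fin.ext_iff] <;> omega,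
      by simp [Fin.ext_iff] <;> omega, ?_⟩
    rintro u htu ⟨hc, hd⟩
    rcases u with j | (j | un') <;> simp at htu hc hd <;> omega
  · refine ⟨Sum.inr (Sum.inl ⟨1, by omega⟩), by simp, by simp, by simp [Fin.ext_iff] <;> omega,
      by simp [Fin.ext_iff] <;> omega, ?_⟩
    rintro u htu ⟨hc, hd⟩
    rcases u with j | (j | un') <;> simp at htu hc hd <;> omega

lemma sel2_exists (hm : 4 ≤ m) (hme : Even m) (c d : HVx m) (hcd : c ≠ d) :
    ∃ t, Sel2 (Hm m) c d t := by
  rcases c with s | (s | uc) <;> rcases d with s' | (s' | ud)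
  · exact sel2_uu hm hme s s' (fun hh => hcd (by rw [hh]))
  · exact sel2_uv hm hme s s'
  · exact sel2_uw hm hme s ud
  · obtain ⟨t, ht⟩ := sel2_uv hm hme s' s
    exact ⟨t, sel2_symm ht⟩
  · obtain ⟨t, ht⟩ := sel2_uu hm hme s s' (fun hh => hcd (by rw [hh]))
    exact ⟨swp t, sel2_swp ht⟩
  · obtain ⟨t, ht⟩ := sel2_uw hm hme s ud
    exact ⟨swp t, sel2_swp ht⟩
  · obtain ⟨t, ht⟩ := sel2_uw hm hme s' uc
    exact ⟨t, sel2_symm ht⟩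
  · obtain ⟨t, ht⟩ := sel2_uw hm hme s' uc
    exact ⟨swp t, sel2_symm (sel2_swp ht)⟩
  · exact absurd rfl hcd

end Sel2Exists

section Sel1Exists
variable {m : ℕ}

lemma sel1_swp {c a b t : HVx m} (h : Sel1 (Hm m) c a b t) :
    Sel1 (Hm m) (swp c) (swp a) (swp b) (swp t) := by
  obtain ⟨h1, h2, h3, h4, h5, h6⟩ := h
  have tr : ∀ x y : HVx m, ¬(Hm m).Adj x y → ¬(Hm m).Adj (swp x) (swp y) :=
    fun x y hxy hh => hxy (swp_adj.mp hh)
  refine ⟨fun hh => h1 (swp_inj hh), fun hh => h2 (swp_inj hh), fun hh => h3 (swp_inj hh),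
    tr _ _ h4, ?_, ?_⟩
  · rcases h5 with h | ⟨ha, hb⟩
    · exact Or.inl (tr _ _ h)
    · exact Or.inr ⟨tr _ _ ha, hb.imp (tr _ _) (tr _ _)⟩
  · rcases h6 with h | ⟨ha, hb⟩
    · exact Or.inl (tr _ _ h)
    · exact Or.inr ⟨tr _ _ ha, hb.imp (tr _ _) (tr _ _)⟩

/-- Case `c = w`, `a = u_α` with `α` even: subtree. -/
lemma sel1_w_auxU (hm : 4 ≤ m) (hme : Even m) (α : Fin m) (hα : (α : ℕ) % 2 = 0) (b : HVx m) :
    ∃ t, Sel1 (Hm m) (Sum.inr (Sum.inr ())) (Sum.inl α) b t := by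
  obtain ⟨r, hr⟩ := hme
  have hαv := α.isLt
  rcases b with β | (β | ub)
  · -- b = u_β
    have hβv := β.isLt
    by_cases hblk : (β : ℕ) / 2 ≠ (α : ℕ) / 2
    · by_cases h1 : (β : ℕ) = 1
      · refine ⟨Sum.inr (Sum.inl ⟨3, by omega⟩), ?_, ?_, ?_, ?_, ?_, ?_⟩ <;>
          simp [Fin.ext_iff] <;> omega
      · refine ⟨Sum.inr (Sum.inl ⟨1, by omega⟩), ?_, ?_, ?_, ?_, ?_, ?_⟩ <;>
          simp [Fin.ext_iff] <;> omega
    · by_cases h1 : (β : ℕ) = (α : ℕ) + 1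
      · refine ⟨Sum.inr (Sum.inl ⟨1, by omega⟩), ?_, ?_, ?_, ?_, ?_, ?_⟩ <;>
          simp [Fin.ext_iff] <;> omega
      · refine ⟨Sum.inl ⟨(α : ℕ) + 1, by omega⟩, ?_, ?_, ?_, ?_, ?_, ?_⟩ <;>
          simp [Fin.ext_iff] <;> omega
  · -- b = v_β
    have hβv := β.isLt
    refine ⟨Sum.inl ⟨(α : ℕ) + 1, by omega⟩, ?_, ?_, ?_, ?_, ?_, ?_⟩ <;>
      simp [Fin.ext_iff] <;> omega
  · -- b = w
    refine ⟨Sum.inl ⟨(α : ℕ) + 1, by omega⟩, ?_, ?_, ?_, ?_, ?_, ?_⟩ <;>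
      simp [Fin.ext_iff] <;> omega

/-- Mirror of `sel1_w_auxU`: `a = v_α` with `α` even. -/
lemma sel1_w_auxV (hm : 4 ≤ m) (hme : Even m) (α : Fin m) (hα : (α : ℕ) % 2 = 0) (b : HVx m) :
    ∃ t, Sel1 (Hm m) (Sum.inr (Sum.inr ())) (Sum.inr (Sum.inl α)) b t := by
  obtain ⟨t, ht⟩ := sel1_w_auxU hm hme α hα (swp b)
  have h2 := sel1_swp ht
  rw [swp_swp] at h2
  exact ⟨swp t, h2⟩

lemma sel1_w (hm : 4 ≤ m) (hme : Even m) (a b : HVx m) :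
    ∃ t, Sel1 (Hm m) (Sum.inr (Sum.inr ())) a b t := by
  have try_even : ∀ x y : HVx m,
      (∃ α : Fin m, (x = Sum.inl α ∨ x = Sum.inr (Sum.inl α)) ∧ (α : ℕ) % 2 = 0) →
      ∃ t, Sel1 (Hm m) (Sum.inr (Sum.inr ())) x y t := by
    rintro x y ⟨α, hx | hx, hα⟩
    · exact hx ▸ sel1_w_auxU hm hme α hα y
    · exact hx ▸ sel1_w_auxV hm hme α hα y
  by_cases hA : ∃ α : Fin m, (a = Sum.inl α ∨ a = Sum.inr (Sum.inl α)) ∧ (α : ℕ) % 2 = 0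
  · exact try_even a b hA
  · by_cases hB : ∃ α : Fin m, (b = Sum.inl α ∨ b = Sum.inr (Sum.inl α)) ∧ (α : ℕ) % 2 = 0
    · obtain ⟨t, ht⟩ := try_even b a hB
      exact ⟨t, sel1_symm ht⟩
    · -- no even-indexed pebbled u/v vertex
      push_neg at hA hB
      have c1 : (1 : ℕ) < m := by omega
      have c3 : (3 : ℕ) < m := by omega
      have notc : ∀ x : HVx m,
          (∀ α : Fin m, (x = Sum.inl α ∨ x = Sum.inr (Sum.inl α)) → ¬(α : ℕ) % 2 = 0) →
          ¬ (Hm m).Adj x (Sum.inr (Sum.inr ())) := by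
        rintro x hx
        rcases x with α | (α | u)
        · simpa using hx α (Or.inl rfl)
        · simpa using hx α (Or.inr rfl)
        · simp
      have hc5 : ∀ t : HVx m,
          (¬(Hm m).Adj t a ∨ (¬(Hm m).Adj a (Sum.inr (Sum.inr ())) ∧
            (¬(Hm m).Adj a b ∨ ¬(Hm m).Adj b (Sum.inr (Sum.inr ()))))) :=
        fun t => Or.inr ⟨notc a hA, Or.inr (notc b hB)⟩
      have hc6 : ∀ t : HVx m,
          (¬(Hm m).Adj t b ∨ (¬(Hm m).Adj b (Sum.inr (Sum.inr ())) ∧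
            (¬(Hm m).Adj b a ∨ ¬(Hm m).Adj a (Sum.inr (Sum.inr ()))))) :=
        fun t => Or.inr ⟨notc b hB, Or.inr (notc a hA)⟩
      by_cases h1 : a = Sum.inl (⟨1, c1⟩ : Fin m) ∨ b = Sum.inl (⟨1, c1⟩ : Fin m)
      · by_cases h3 : a = Sum.inl (⟨3, c3⟩ : Fin m) ∨ b = Sum.inl (⟨3, c3⟩ : Fin m)
        · -- both u1, u3 pebbled: use v1
          refine ⟨Sum.inr (Sum.inl ⟨1, c1⟩), by simp, ?_, ?_, by simp, hc5 _, hc6 _⟩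
          · rcases h1 with h | h
            · rw [h]; simp
            · rcases h3 with h' | h'
              · rw [h']; simp
              · rw [h] at h'; simp [Fin.ext_iff] at h'
          · rcases h1 with h | h
            · rcases h3 with h' | h'
              · rw [h] at h'; simp [Fin.ext_iff] at h'
              · rw [h']; simp
            · rw [h]; simp
        · push_neg at h3
          exact ⟨Sum.inl ⟨3, c3⟩, by simp, fun hh => h3.1 hh.symm, fun hh => h3.2 hh.symm,
            by simp, hc5 _, hc6 _⟩
      · push_neg at h1
        exact ⟨Sum.inl ⟨1, c1⟩, by simp, fun hh => h1.1 hh.symm, fun hh => h1.2 hh.symm,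
          by simp, hc5 _, hc6 _⟩

end Sel1Exists

/-- F0 subtree, `γ` even: `a = v_{γ+1}`. -/
lemma sel1_u_f0_even (hm : 4 ≤ m) (hme : Even m) (γ : Fin m) (hγ : (γ : ℕ) % 2 = 0)
    (hp : (γ : ℕ) + 1 < m) (b : HVx m) :
    ∃ t, Sel1 (Hm m) (Sum.inl γ) (Sum.inr (Sum.inl ⟨(γ : ℕ) + 1, hp⟩)) b t := by
  obtain ⟨r, hr⟩ := hme
  have hγv := γ.isLt
  rcases b with β | (β | ub)
  · have hβv := β.isLt
    by_cases hf : (β : ℕ) = (γ : ℕ) + 1 ∨ (β : ℕ) / 2 ≠ (γ : ℕ) / 2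
    · refine ⟨Sum.inr (Sum.inl γ), ?_, ?_, ?_, ?_, ?_, ?_⟩ <;> simp [Fin.ext_iff] <;> omega
    · refine ⟨Sum.inl ⟨(γ : ℕ) + 1, hp⟩, ?_, ?_, ?_, ?_, ?_, ?_⟩ <;>
        simp [Fin.ext_iff] <;> omega
  · have hβv := β.isLt
    refine ⟨Sum.inl ⟨(γ : ℕ) + 1, hp⟩, ?_, ?_, ?_, ?_, ?_, ?_⟩ <;>
      simp [Fin.ext_iff] <;> omega
  · refine ⟨Sum.inl ⟨(γ : ℕ) + 1, hp⟩, ?_, ?_, ?_, ?_, ?_, ?_⟩ <;>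
      simp [Fin.ext_iff] <;> omega

/-- F0 subtree, `γ` odd: `a = v_{γ-1}`. -/
lemma sel1_u_f0_odd (hm : 4 ≤ m) (hme : Even m) (γ : Fin m) (hγ : (γ : ℕ) % 2 = 1)
    (hp : (γ : ℕ) - 1 < m) (b : HVx m) :
    ∃ t, Sel1 (Hm m) (Sum.inl γ) (Sum.inr (Sum.inl ⟨(γ : ℕ) - 1, hp⟩)) b t := by
  obtain ⟨r, hr⟩ := hme
  have hγv := γ.isLt
  rcases b with β | (β | ub)
  · have hβv := β.isLt
    by_cases hf : (β : ℕ) = (γ : ℕ) - 1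
    · refine ⟨Sum.inr (Sum.inr ()), ?_, ?_, ?_, ?_, ?_, ?_⟩ <;> simp [Fin.ext_iff] <;> omega
    · by_cases hblk : (β : ℕ) / 2 ≠ (γ : ℕ) / 2
      · by_cases h1 : (γ : ℕ) = 1
        · refine ⟨Sum.inr (Sum.inl ⟨2, by omega⟩), ?_, ?_, ?_, ?_, ?_, ?_⟩ <;>
            simp [Fin.ext_iff] <;> omega
        · refine ⟨Sum.inr (Sum.inl ⟨0, by omega⟩), ?_, ?_, ?_, ?_, ?_, ?_⟩ <;>
            simp [Fin.ext_iff] <;> omega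
      · refine ⟨Sum.inl ⟨(γ : ℕ) - 1, hp⟩, ?_, ?_, ?_, ?_, ?_, ?_⟩ <;>
          simp [Fin.ext_iff] <;> omega
  · have hβv := β.isLt
    refine ⟨Sum.inl ⟨(γ : ℕ) - 1, hp⟩, ?_, ?_, ?_, ?_, ?_, ?_⟩ <;>
      simp [Fin.ext_iff] <;> omega
  · refine ⟨Sum.inl ⟨(γ : ℕ) - 1, hp⟩, ?_, ?_, ?_, ?_, ?_, ?_⟩ <;>
      simp [Fin.ext_iff] <;> omega

set_option maxHeartbeats 2000000 in
lemma sel1_u (hm : 4 ≤ m) (hme : Even m) (γ : Fin m) (a b : HVx m) :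
    ∃ t, Sel1 (Hm m) (Sum.inl γ) a b t := by
  obtain ⟨r, hr⟩ := id hme
  have hγv := γ.isLt
  by_cases hγ : (γ : ℕ) % 2 = 0
  · have hp : (γ : ℕ) + 1 < m := by omega
    by_cases ha : a = Sum.inr (Sum.inl ⟨(γ : ℕ) + 1, hp⟩)
    · rw [ha]; exact sel1_u_f0_even hm hme γ hγ hp b
    · by_cases hb : b = Sum.inr (Sum.inl ⟨(γ : ℕ) + 1, hp⟩)
      · rw [hb]
        obtain ⟨t, ht⟩ := sel1_u_f0_even hm hme γ hγ hp a
        exact ⟨t, sel1_symm ht⟩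
      · rcases a with α | (α | ua) <;> rcases b with β | (β | ub)
        · -- (u,u) : F4
          have hαv := α.isLt; have hβv := β.isLt
          by_cases hc : ((α : ℕ) = (γ : ℕ) + 1 ∧ (β : ℕ) / 2 ≠ (γ : ℕ) / 2) ∨
              ((β : ℕ) = (γ : ℕ) + 1 ∧ (α : ℕ) / 2 ≠ (γ : ℕ) / 2)
          · refine ⟨Sum.inr (Sum.inl γ), ?_, ?_, ?_, ?_, ?_, ?_⟩ <;>
              simp [Fin.ext_iff] <;> omega
          · refine ⟨Sum.inr (Sum.inl ⟨(γ : ℕ) + 1, hp⟩), ?_, ?_, ?_, ?_, ?_, ?_⟩ <;>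
              simp [Fin.ext_iff] <;> omega
        · -- (u,v) : F1
          have hαv := α.isLt; have hβv := β.isLt
          have hb' : ¬(β : ℕ) = (γ : ℕ) + 1 := by simpa [Fin.ext_iff] using hb
          by_cases hc : (α : ℕ) = (β : ℕ) ∧ (β : ℕ) % 2 = 1 ∧ (β : ℕ) / 2 ≠ (γ : ℕ) / 2
          · refine ⟨Sum.inr (Sum.inl ⟨(β : ℕ) - 1, by omega⟩), ?_, ?_, ?_, ?_, ?_, ?_⟩ <;>
              simp [Fin.ext_iff] <;> omega
          · refine ⟨Sum.inr (Sum.inl ⟨(γ : ℕ) + 1, hp⟩), ?_, ?_, ?_, ?_, ?_, ?_⟩ <;>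
              simp [Fin.ext_iff] <;> omega
        · -- (u,w)
          have hαv := α.isLt
          refine ⟨Sum.inr (Sum.inl ⟨(γ : ℕ) + 1, hp⟩), ?_, ?_, ?_, ?_, ?_, ?_⟩ <;>
            simp [Fin.ext_iff] <;> omega
        · -- (v,u) : F1 sym
          have hαv := α.isLt; have hβv := β.isLt
          have ha' : ¬(α : ℕ) = (γ : ℕ) + 1 := by simpa [Fin.ext_iff] using ha
          by_cases hc : (β : ℕ) = (α : ℕ) ∧ (α : ℕ) % 2 = 1 ∧ (α : ℕ) / 2 ≠ (γ : ℕ) / 2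
          · refine ⟨Sum.inr (Sum.inl ⟨(α : ℕ) - 1, by omega⟩), ?_, ?_, ?_, ?_, ?_, ?_⟩ <;>
              simp [Fin.ext_iff] <;> omega
          · refine ⟨Sum.inr (Sum.inl ⟨(γ : ℕ) + 1, hp⟩), ?_, ?_, ?_, ?_, ?_, ?_⟩ <;>
              simp [Fin.ext_iff] <;> omega
        · -- (v,v)
          have hαv := α.isLt; have hβv := β.isLt
          have ha' : ¬(α : ℕ) = (γ : ℕ) + 1 := by simpa [Fin.ext_iff] using ha
          have hb' : ¬(β : ℕ) = (γ : ℕ) + 1 := by simpa [Fin.ext_iff] using hb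
          refine ⟨Sum.inr (Sum.inl ⟨(γ : ℕ) + 1, hp⟩), ?_, ?_, ?_, ?_, ?_, ?_⟩ <;>
            simp [Fin.ext_iff] <;> omega
        · -- (v,w) : F3
          have hαv := α.isLt
          have ha' : ¬(α : ℕ) = (γ : ℕ) + 1 := by simpa [Fin.ext_iff] using ha
          by_cases hc : (α : ℕ) % 2 = 0 ∧ (α : ℕ) / 2 ≠ (γ : ℕ) / 2
          · refine ⟨Sum.inl ⟨(γ : ℕ) + 1, hp⟩, ?_, ?_, ?_, ?_, ?_, ?_⟩ <;>
              simp [Fin.ext_iff] <;> omega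
          · refine ⟨Sum.inr (Sum.inl ⟨(γ : ℕ) + 1, hp⟩), ?_, ?_, ?_, ?_, ?_, ?_⟩ <;>
              simp [Fin.ext_iff] <;> omega
        · -- (w,u)
          have hβv := β.isLt
          refine ⟨Sum.inr (Sum.inl ⟨(γ : ℕ) + 1, hp⟩), ?_, ?_, ?_, ?_, ?_, ?_⟩ <;>
            simp [Fin.ext_iff] <;> omega
        · -- (w,v) : F3 sym
          have hβv := β.isLt
          have hb' : ¬(β : ℕ) = (γ : ℕ) + 1 := by simpa [Fin.ext_iff] using hb
          by_cases hc : (β : ℕ) % 2 = 0 ∧ (β : ℕ) / 2 ≠ (γ : ℕ) / 2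
          · refine ⟨Sum.inl ⟨(γ : ℕ) + 1, hp⟩, ?_, ?_, ?_, ?_, ?_, ?_⟩ <;>
              simp [Fin.ext_iff] <;> omega
          · refine ⟨Sum.inr (Sum.inl ⟨(γ : ℕ) + 1, hp⟩), ?_, ?_, ?_, ?_, ?_, ?_⟩ <;>
              simp [Fin.ext_iff] <;> omega
        · -- (w,w)
          refine ⟨Sum.inr (Sum.inl ⟨(γ : ℕ) + 1, hp⟩), ?_, ?_, ?_, ?_, ?_, ?_⟩ <;>
            simp [Fin.ext_iff] <;> omega
  · -- γ odd
    have hγ1 : (γ : ℕ) % 2 = 1 := by omega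
    have hp : (γ : ℕ) - 1 < m := by omega
    by_cases ha : a = Sum.inr (Sum.inl ⟨(γ : ℕ) - 1, hp⟩)
    · rw [ha]; exact sel1_u_f0_odd hm hme γ hγ1 hp b
    · by_cases hb : b = Sum.inr (Sum.inl ⟨(γ : ℕ) - 1, hp⟩)
      · rw [hb]
        obtain ⟨t, ht⟩ := sel1_u_f0_odd hm hme γ hγ1 hp a
        exact ⟨t, sel1_symm ht⟩
      · rcases a with α | (α | ua) <;> rcases b with β | (β | ub)
        · -- (u,u)
          have hαv := α.isLt; have hβv := β.isLt
          refine ⟨Sum.inr (Sum.inl ⟨(γ : ℕ) - 1, hp⟩), ?_, ?_, ?_, ?_, ?_, ?_⟩ <;>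
            simp [Fin.ext_iff] <;> omega
        · -- (u,v) : F1
          have hαv := α.isLt; have hβv := β.isLt
          have hb' : ¬(β : ℕ) = (γ : ℕ) - 1 := by simpa [Fin.ext_iff] using hb
          by_cases hc : (α : ℕ) = (β : ℕ) ∧ (β : ℕ) % 2 = 1 ∧ (β : ℕ) / 2 ≠ (γ : ℕ) / 2
          · refine ⟨Sum.inr (Sum.inl ⟨(β : ℕ) - 1, by omega⟩), ?_, ?_, ?_, ?_, ?_, ?_⟩ <;>
              simp [Fin.ext_iff] <;> omega
          · refine ⟨Sum.inr (Sum.inl ⟨(γ : ℕ) - 1, hp⟩), ?_, ?_, ?_, ?_, ?_, ?_⟩ <;>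
              simp [Fin.ext_iff] <;> omega
        · -- (u,w) : F5
          have hαv := α.isLt
          by_cases hc : (α : ℕ) % 2 = 0 ∧ (α : ℕ) / 2 ≠ (γ : ℕ) / 2
          · by_cases h1 : (γ : ℕ) = 1
            · refine ⟨Sum.inr (Sum.inl ⟨3, by omega⟩), ?_, ?_, ?_, ?_, ?_, ?_⟩ <;>
                simp [Fin.ext_iff] <;> omega
            · refine ⟨Sum.inr (Sum.inl ⟨1, by omega⟩), ?_, ?_, ?_, ?_, ?_, ?_⟩ <;>
                simp [Fin.ext_iff] <;> omega
          · refine ⟨Sum.inr (Sum.inl ⟨(γ : ℕ) - 1, hp⟩), ?_, ?_, ?_, ?_, ?_, ?_⟩ <;>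
              simp [Fin.ext_iff] <;> omega
        · -- (v,u) : F1 sym
          have hαv := α.isLt; have hβv := β.isLt
          have ha' : ¬(α : ℕ) = (γ : ℕ) - 1 := by simpa [Fin.ext_iff] using ha
          by_cases hc : (β : ℕ) = (α : ℕ) ∧ (α : ℕ) % 2 = 1 ∧ (α : ℕ) / 2 ≠ (γ : ℕ) / 2
          · refine ⟨Sum.inr (Sum.inl ⟨(α : ℕ) - 1, by omega⟩), ?_, ?_, ?_, ?_, ?_, ?_⟩ <;>
              simp [Fin.ext_iff] <;> omega
          · refine ⟨Sum.inr (Sum.inl ⟨(γ : ℕ) - 1, hp⟩), ?_, ?_, ?_, ?_, ?_, ?_⟩ <;>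
              simp [Fin.ext_iff] <;> omega
        · -- (v,v) : F2
          have hαv := α.isLt; have hβv := β.isLt
          have ha' : ¬(α : ℕ) = (γ : ℕ) - 1 := by simpa [Fin.ext_iff] using ha
          have hb' : ¬(β : ℕ) = (γ : ℕ) - 1 := by simpa [Fin.ext_iff] using hb
          by_cases hc : ((α : ℕ) = (γ : ℕ) ∧ (β : ℕ) / 2 ≠ (γ : ℕ) / 2) ∨
              ((β : ℕ) = (γ : ℕ) ∧ (α : ℕ) / 2 ≠ (γ : ℕ) / 2)
          · refine ⟨Sum.inl ⟨(γ : ℕ) - 1, hp⟩, ?_, ?_, ?_, ?_, ?_, ?_⟩ <;>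
              simp [Fin.ext_iff] <;> omega
          · refine ⟨Sum.inr (Sum.inl ⟨(γ : ℕ) - 1, hp⟩), ?_, ?_, ?_, ?_, ?_, ?_⟩ <;>
              simp [Fin.ext_iff] <;> omega
        · -- (v,w)
          have hαv := α.isLt
          have ha' : ¬(α : ℕ) = (γ : ℕ) - 1 := by simpa [Fin.ext_iff] using ha
          refine ⟨Sum.inr (Sum.inl ⟨(γ : ℕ) - 1, hp⟩), ?_, ?_, ?_, ?_, ?_, ?_⟩ <;>
            simp [Fin.ext_iff] <;> omega
        · -- (w,u) : F5 sym
          have hβv := β.isLt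
          by_cases hc : (β : ℕ) % 2 = 0 ∧ (β : ℕ) / 2 ≠ (γ : ℕ) / 2
          · by_cases h1 : (γ : ℕ) = 1
            · refine ⟨Sum.inr (Sum.inl ⟨3, by omega⟩), ?_, ?_, ?_, ?_, ?_, ?_⟩ <;>
                simp [Fin.ext_iff] <;> omega
            · refine ⟨Sum.inr (Sum.inl ⟨1, by omega⟩), ?_, ?_, ?_, ?_, ?_, ?_⟩ <;>
                simp [Fin.ext_iff] <;> omega
          · refine ⟨Sum.inr (Sum.inl ⟨(γ : ℕ) - 1, hp⟩), ?_, ?_, ?_, ?_, ?_, ?_⟩ <;>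
              simp [Fin.ext_iff] <;> omega
        · -- (w,v)
          have hβv := β.isLt
          have hb' : ¬(β : ℕ) = (γ : ℕ) - 1 := by simpa [Fin.ext_iff] using hb
          refine ⟨Sum.inr (Sum.inl ⟨(γ : ℕ) - 1, hp⟩), ?_, ?_, ?_, ?_, ?_, ?_⟩ <;>
            simp [Fin.ext_iff] <;> omega
        · -- (w,w)
          refine ⟨Sum.inr (Sum.inl ⟨(γ : ℕ) - 1, hp⟩), ?_, ?_, ?_, ?_, ?_, ?_⟩ <;>
            simp [Fin.ext_iff] <;> omega

lemma sel1_v (hm : 4 ≤ m) (hme : Even m) (γ : Fin m) (a b : HVx m) :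
    ∃ t, Sel1 (Hm m) (Sum.inr (Sum.inl γ)) a b t := by
  obtain ⟨t, ht⟩ := sel1_u hm hme γ (swp a) (swp b)
  have h2 := sel1_swp ht
  rw [swp_swp, swp_swp] at h2
  exact ⟨swp t, h2⟩

lemma lower_main (hm : 4 ≤ m) (hme : Even m) (D : HVx m → ℕ) (hcap : ∀ v, D v ≤ 2)
    (hsum : ∑ v, D v ≤ 4) : ∃ t, ¬ Cond (Hm m) D t := by
  classical
  by_cases hd : ∃ c, 2 ≤ D c
  · obtain ⟨c, hc⟩ := hd
    by_cases hd2 : ∃ d, d ≠ c ∧ 2 ≤ D d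
    · obtain ⟨d, hdc, hd2v⟩ := hd2
      obtain ⟨t, ht⟩ := sel2_exists hm hme c d hdc.symm
      have hz : ∀ v, v ≠ c → v ≠ d → D v = 0 := by
        intro v h1 h2
        by_contra hv
        have := sum3' (D := D) (a := c) (b := d) (c := v) hdc.symm (Ne.symm h1) (Ne.symm h2)
        omega
      exact ⟨t, notCond_two_doubles hcap hz (hz t ht.1 ht.2.1) ht⟩
    · push_neg at hd2
      have hone : ∀ v, v ≠ c → D v ≤ 1 := fun v hv => by have := hd2 v hv; omega
      have dispatch : ∀ a' b' : HVx m, (∀ v, v ≠ c → v ≠ a' → v ≠ b' → D v = 0) →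
          ∃ t, ¬ Cond (Hm m) D t := by
        intro a' b' hz'
        have hsel : ∃ t, Sel1 (Hm m) c a' b' t := by
          rcases c with γ | (γ | uc)
          · exact sel1_u hm hme γ a' b'
          · exact sel1_v hm hme γ a' b'
          · cases uc; exact sel1_w hm hme a' b'
        obtain ⟨t, ht⟩ := hsel
        exact ⟨t, notCond_one_double hcap hone hz' (hz' t ht.1 ht.2.1 ht.2.2.1) ht⟩
      by_cases hA : ∃ a, a ≠ c ∧ 1 ≤ D a
      · obtain ⟨a, hac, ha1⟩ := hA
        by_cases hB : ∃ b, b ≠ c ∧ b ≠ a ∧ 1 ≤ D b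
        · obtain ⟨b, hbc, hba, hb1⟩ := hB
          refine dispatch a b ?_
          intro v h1 h2 h3
          by_contra hv
          have := sum4' (D := D) (a := c) (b := a) (c := b) (d := v) (Ne.symm hac)
            (Ne.symm hbc) (Ne.symm h1) (Ne.symm hba) (Ne.symm h2) (Ne.symm h3)
          omega
        · push_neg at hB
          refine dispatch a a ?_
          intro v h1 h2 _
          have := hB v h1 h2; omega
      · push_neg at hA
        refine dispatch c c ?_
        intro v h1 _ _
        have := hA v h1; omega
  · push_neg at hd
    have hone : ∀ v, D v ≤ 1 := fun v => by have := hd v; omega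
    have c0 : (0 : ℕ) < m := by omega
    have c1 : (1 : ℕ) < m := by omega
    have h5 := sum5' (D := D) (a := Sum.inl (⟨0, c0⟩ : Fin m)) (b := Sum.inl (⟨1, c1⟩ : Fin m))
      (c := Sum.inr (Sum.inl (⟨0, c0⟩ : Fin m))) (d := Sum.inr (Sum.inl (⟨1, c1⟩ : Fin m)))
      (e := Sum.inr (Sum.inr ()))
      (by simp [Fin.ext_iff]) (by simp) (by simp) (by simp) (by simp)
      (by simp [Fin.ext_iff]) (by simp) (by simp) (by simp) (by simp)
    by_cases e1 : D (Sum.inl (⟨0, c0⟩ : Fin m)) = 0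
    · exact ⟨_, notCond_no_double hone e1⟩
    by_cases e2 : D (Sum.inl (⟨1, c1⟩ : Fin m)) = 0
    · exact ⟨_, notCond_no_double hone e2⟩
    by_cases e3 : D (Sum.inr (Sum.inl (⟨0, c0⟩ : Fin m))) = 0
    · exact ⟨_, notCond_no_double hone e3⟩
    by_cases e4 : D (Sum.inr (Sum.inl (⟨1, c1⟩ : Fin m))) = 0
    · exact ⟨_, notCond_no_double hone e4⟩
    refine ⟨Sum.inr (Sum.inr ()), notCond_no_double hone (by omega)⟩

section Upper
variable {V : Type*} [Fintype V] [DecidableEq V] {G : SimpleGraph V} {D : V → ℕ}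

lemma kreach_self {t : V} (h : 1 ≤ D t) : KReachable G D 1 t :=
  ⟨D, Relation.ReflTransGen.refl, h⟩

lemma kreach_one {a t : V} (h : G.Adj a t) (h2 : 2 ≤ D a) : KReachable G D 1 t := by
  refine ⟨_, Relation.ReflTransGen.single ⟨a, t, h, h2, rfl⟩, ?_⟩
  simp [Function.update]

lemma kreach_two {a b t : V} (h1 : G.Adj a b) (h2 : G.Adj b t) (ha : 2 ≤ D a)
    (hb : 1 ≤ D b) : KReachable G D 1 t := by
  have hab : a ≠ b := h1.ne
  refine ⟨_, Relation.ReflTransGen.tail (Relation.ReflTransGen.single ⟨a, b, h1, ha, rfl⟩)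
    ⟨b, t, h2, ?_, rfl⟩, ?_⟩
  · simp [Function.update]
    omega
  · simp [Function.update]

end Upper

section FiveDist
variable {m : ℕ}

def D5 (m : ℕ) (hm : 4 ≤ m) : HVx m → ℕ := fun v =>
  if v = Sum.inr (Sum.inr ()) then 2
  else if v = Sum.inl (⟨1, by omega⟩ : Fin m) then 2
  else if v = Sum.inr (Sum.inl (⟨1, by omega⟩ : Fin m)) then 1 else 0

lemma D5_cap (hm : 4 ≤ m) : ∀ v, D5 m hm v ≤ 2 := by
  intro v; unfold D5; split_ifs <;> omega

lemma D5_w (hm : 4 ≤ m) : D5 m hm (Sum.inr (Sum.inr ())) = 2 := by simp [D5]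

lemma D5_u1 (hm : 4 ≤ m) : D5 m hm (Sum.inl (⟨1, by omega⟩ : Fin m)) = 2 := by simp [D5]

lemma D5_v1 (hm : 4 ≤ m) : D5 m hm (Sum.inr (Sum.inl (⟨1, by omega⟩ : Fin m))) = 1 := by
  simp [D5]

lemma D5_solvable (hm : 4 ≤ m) : Solvable (Hm m) (D5 m hm) := by
  intro v
  rcases v with i | (i | uv)
  · by_cases hpar : (i : ℕ) % 2 = 0
    · exact kreach_one (by simp [hpar]) (D5_w hm).ge
    · by_cases h1 : (i : ℕ) = 1
      · have : i = (⟨1, by omega⟩ : Fin m) := by simp [Fin.ext_iff, h1]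
        rw [this]
        exact kreach_self (by rw [D5_u1 hm]; omega)
      · have hi := i.isLt
        refine kreach_one (a := Sum.inl (⟨1, by omega⟩ : Fin m)) (by simp; omega)
          (D5_u1 hm).ge
  · by_cases hpar : (i : ℕ) % 2 = 0
    · exact kreach_one (by simp [hpar]) (D5_w hm).ge
    · by_cases h1 : (i : ℕ) = 1
      · have : i = (⟨1, by omega⟩ : Fin m) := by simp [Fin.ext_iff, h1]
        rw [this]
        exact kreach_self (D5_v1 hm).ge
      · have hi := i.isLt
        refine kreach_two (a := Sum.inl (⟨1, by omega⟩ : Fin m))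
          (b := Sum.inr (Sum.inl (⟨1, by omega⟩ : Fin m))) (by simp) (by simp; omega)
          (D5_u1 hm).ge (D5_v1 hm).ge
  · cases uv
    exact kreach_self (by rw [D5_w hm]; omega)

lemma D5_size (hm : 4 ≤ m) : distSize (D5 m hm) = 5 := by
  classical
  have hrw : ∀ v : HVx m, D5 m hm v =
      (if v = Sum.inr (Sum.inr ()) then 2 else 0) +
      (if v = Sum.inl (⟨1, by omega⟩ : Fin m) then 2 else 0) +
      (if v = Sum.inr (Sum.inl (⟨1, by omega⟩ : Fin m)) then 1 else 0) := by
    intro v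
    unfold D5
    split_ifs with h1 h2 h3 <;> simp_all
  unfold distSize
  rw [Finset.sum_congr rfl (fun v _ => hrw v)]
  rw [Finset.sum_add_distrib, Finset.sum_add_distrib]
  simp [Finset.sum_ite_eq']

end FiveDist

theorem Hm_restricted_eq_five (m : ℕ) (hm : 4 ≤ m) (heven : Even m) :
    5 ≤ optPebblingRes (Hm m) 2 ∧ optPebblingRes (Hm m) 2 = 5 := by
  classical
  have hub : (5 : ℕ) ∈ {n | ∃ D : (Fin m ⊕ (Fin m ⊕ Unit)) → ℕ,
      (∀ v, D v ≤ 2) ∧ Solvable (Hm m) D ∧ distSize D = n} :=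
    ⟨D5 m hm, D5_cap hm, D5_solvable hm, D5_size hm⟩
  have hlb : ∀ n ∈ {n | ∃ D : (Fin m ⊕ (Fin m ⊕ Unit)) → ℕ,
      (∀ v, D v ≤ 2) ∧ Solvable (Hm m) D ∧ distSize D = n}, 5 ≤ n := by
    rintro n ⟨D, hcap, hsol, hsize⟩
    by_contra hlt
    push_neg at hlt
    have hsum : ∑ v, D v ≤ 4 := by
      have : distSize D = ∑ v, D v := rfl
      omega
    obtain ⟨t, hnc⟩ := lower_main hm heven D hcap hsum
    exact hnc (reach_cond hsum (hsol t))
  have hne : {n | ∃ D : (Fin m ⊕ (Fin m ⊕ Unit)) → ℕ,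
      (∀ v, D v ≤ 2) ∧ Solvable (Hm m) D ∧ distSize D = n}.Nonempty := ⟨5, hub⟩
  have hge : 5 ≤ optPebblingRes (Hm m) 2 := hlb _ (Nat.sInf_mem hne)
  have hle : optPebblingRes (Hm m) 2 ≤ 5 := Nat.sInf_le hub
  exact ⟨hge, le_antisymm hle hge⟩
end

section
/- For the graph H_m (m ≥ 4 even), π*(H_m) = 4. In particular, every vertex of H_m is within distance 2 of w, so 4 pebbles on w form a solvable distribution, and no solvable distribution of size at most 3 exists. -/
open Finset

lemma adj_uu {m : ℕ} (i j : Fin m) :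
    (Hm m).Adj (.inl i) (.inl j) ↔ ¬ i.val / 2 = j.val / 2 := by
  simp only [Hm, SimpleGraph.fromRel_adj, HmRel, ne_eq, Sum.inl.injEq]
  constructor
  · rintro ⟨-, h | h⟩ <;> omega
  · intro h; exact ⟨fun hij => h (by rw [hij]), Or.inl h⟩

lemma adj_vv {m : ℕ} (i j : Fin m) :
    (Hm m).Adj (.inr (.inl i)) (.inr (.inl j)) ↔ ¬ i.val / 2 = j.val / 2 := by
  simp only [Hm, SimpleGraph.fromRel_adj, HmRel, ne_eq, Sum.inr.injEq, Sum.inl.injEq]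
  constructor
  · rintro ⟨-, h | h⟩ <;> omega
  · intro h; exact ⟨fun hij => h (by rw [hij]), Or.inl h⟩

lemma adj_uv {m : ℕ} (i j : Fin m) :
    (Hm m).Adj (.inl i) (.inr (.inl j)) ↔ (i = j ∧ i.val % 2 = 1) := by
  simp [Hm, SimpleGraph.fromRel_adj, HmRel]

lemma adj_vu {m : ℕ} (i j : Fin m) :
    (Hm m).Adj (.inr (.inl i)) (.inl j) ↔ (j = i ∧ j.val % 2 = 1) := by
  rw [(Hm m).adj_comm]; exact adj_uv j i

lemma adj_uw {m : ℕ} (i : Fin m) :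
    (Hm m).Adj (.inl i) (hmW m) ↔ i.val % 2 = 0 := by
  simp [Hm, hmW, SimpleGraph.fromRel_adj, HmRel]

lemma adj_vw {m : ℕ} (i : Fin m) :
    (Hm m).Adj (.inr (.inl i)) (hmW m) ↔ i.val % 2 = 0 := by
  simp [Hm, hmW, SimpleGraph.fromRel_adj, HmRel]

lemma adj_wu {m : ℕ} (i : Fin m) :
    (Hm m).Adj (hmW m) (.inl i) ↔ i.val % 2 = 0 := by
  rw [(Hm m).adj_comm]; exact adj_uw i

lemma adj_wv {m : ℕ} (i : Fin m) :
    (Hm m).Adj (hmW m) (.inr (.inl i)) ↔ i.val % 2 = 0 := by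
  rw [(Hm m).adj_comm]; exact adj_vw i

lemma adj_ww {m : ℕ} : ¬ (Hm m).Adj (hmW m) (hmW m) := (Hm m).irrefl

section
variable {V : Type*} [Fintype V] [DecidableEq V] {G : SimpleGraph V}

lemma reaches_eq_of_no_two {D D' : V → ℕ} (h1 : ∀ v, D v ≤ 1)
    (h : PebblingReaches G D D') : D' = D := by
  rcases (Relation.ReflTransGen.cases_head h) with rfl | ⟨c, hc, -⟩
  · rfl
  · obtain ⟨u, v, -, hu, -⟩ := hc
    exact absurd (h1 u) (by omega)

lemma weight_step {c : V → ℕ} (hc : ∀ u v, G.Adj u v → c v ≤ 2 * c u)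
    {D D' : V → ℕ} (h : PebblingStep G D D') :
    ∑ x, D' x * c x ≤ ∑ x, D x * c x := by
  obtain ⟨u, v, hadj, hu, rfl⟩ := h
  have huv : u ≠ v := hadj.ne
  have hfun : (fun x => (Function.update (Function.update D u (D u - 2)) v (D v + 1)) x * c x)
      = Function.update (Function.update (fun x => D x * c x) u ((D u - 2) * c u)) v ((D v + 1) * c v) := by
    funext x
    by_cases hxv : x = v
    · subst hxv; simp
    · by_cases hxu : x = u
      · subst hxu; simp [Function.update_of_ne hxv, Function.update_of_ne huv]
      · simp [Function.update_of_ne hxv, Function.update_of_ne hxu]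
  rw [hfun]
  rw [Finset.sum_update_of_mem (Finset.mem_univ v)]
  rw [Finset.sum_update_of_mem (by simp [huv] : u ∈ (Finset.univ : Finset V) \ {v})]
  have e1 : ∑ x, D x * c x = ∑ x ∈ (Finset.univ : Finset V) \ {v}, D x * c x + D v * c v :=
    Finset.sum_eq_sum_sdiff_singleton_add (Finset.mem_univ v) _
  have e2 : ∑ x ∈ (Finset.univ : Finset V) \ {v}, D x * c x
      = ∑ x ∈ ((Finset.univ : Finset V) \ {v}) \ {u}, D x * c x + D u * c u :=
    Finset.sum_eq_sum_sdiff_singleton_add (by simp [huv] : u ∈ (Finset.univ : Finset V) \ {v}) _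
  rw [e1, e2]
  have h1 : c v ≤ 2 * c u := hc u v hadj
  have h2 : (D u - 2) * c u + 2 * c u = D u * c u := by
    rw [← add_mul]; congr 1; omega
  have h3 : (D v + 1) * c v = D v * c v + c v := by ring
  omega

lemma weight_reaches {c : V → ℕ} (hc : ∀ u v, G.Adj u v → c v ≤ 2 * c u)
    {D D' : V → ℕ} (h : PebblingReaches G D D') :
    ∑ x, D' x * c x ≤ ∑ x, D x * c x := by
  induction h with
  | refl => exact le_refl _
  | tail _ hstep ih => exact le_trans (weight_step hc hstep) ih

lemma not_reachable_of_far {D : V → ℕ} {t : V}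
    (hzero : ∀ z, z = t ∨ G.Adj t z → D z = 0) (hsize : distSize D ≤ 3) :
    ¬ KReachable G D 1 t := by
  rintro ⟨D', hr, ht⟩
  classical
  set c : V → ℕ := fun v => if v = t then 4 else if G.Adj t v then 2 else 1 with hcdef
  have hone : ∀ z, 1 ≤ c z := by
    intro z; simp only [hcdef]; split_ifs <;> omega
  have hc : ∀ u v, G.Adj u v → c v ≤ 2 * c u := by
    intro u v huv
    by_cases hvt : v = t
    · have huv' : G.Adj u t := hvt ▸ huv
      have hut : u ≠ t := fun h => G.irrefl (h ▸ huv')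
      have hadj : G.Adj t u := huv'.symm
      have h4 : c v = 4 := by simp [hcdef, hvt]
      have h2 : c u = 2 := by simp [hcdef, hut, hadj]
      omega
    · by_cases hadj : G.Adj t v
      · have h2 : c v = 2 := by simp [hcdef, hvt, hadj]
        have := hone u; omega
      · have h1 : c v = 1 := by simp [hcdef, hvt, hadj]
        have := hone u; omega
  have hmono := weight_reaches hc hr
  have hlow : 4 ≤ ∑ x, D' x * c x := by
    calc 4 = 1 * c t := by simp [hcdef]
    _ ≤ D' t * c t := Nat.mul_le_mul_right _ ht
    _ ≤ ∑ x, D' x * c x := Finset.single_le_sum (f := fun x => D' x * c x) (fun x _ => Nat.zero_le _) (Finset.mem_univ t)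
  have hup : ∑ x, D x * c x ≤ 3 := by
    have : ∑ x, D x * c x = ∑ x, D x := by
      apply Finset.sum_congr rfl
      intro x _
      by_cases hx : x = t ∨ G.Adj t x
      · rw [hzero x hx]; ring
      · push_neg at hx
        simp [hcdef, hx.1, hx.2, mul_one]
    rw [this]; exact hsize
  omega
end

lemma pick_odd2 {m : ℕ} (h3m : 3 < m) (i j : Fin m) (h : ¬(i.val % 2 = 1 ∧ j.val % 2 = 1)) :
    ∃ k : Fin m, k.val % 2 = 1 ∧ k.val ≠ i.val ∧ k.val ≠ j.val := by
  by_cases h1 : i.val = 1 ∨ j.val = 1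
  · refine ⟨⟨3, h3m⟩, ?_, ?_, ?_⟩ <;> simp <;> omega
  · refine ⟨⟨1, by omega⟩, ?_, ?_, ?_⟩ <;> simp <;> omega

lemma pick_odd1 {m : ℕ} (h3m : 3 < m) (i : Fin m) :
    ∃ k : Fin m, k.val % 2 = 1 ∧ k.val ≠ i.val := by
  by_cases h1 : i.val = 1
  · exact ⟨⟨3, h3m⟩, by simp, by simp; omega⟩
  · exact ⟨⟨1, by omega⟩, by simp, by simp; omega⟩

lemma separation (m : ℕ) (hm : 4 ≤ m) (heven : Even m)
    (x y : Fin m ⊕ (Fin m ⊕ Unit)) :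
    ∃ t, t ≠ x ∧ t ≠ y ∧ ¬ (Hm m).Adj t x ∧ ¬ (Hm m).Adj t y := by
  have hm2 : m % 2 = 0 := Nat.even_iff.mp heven
  have h3m : 3 < m := by omega
  match x, y with
  | .inl i, .inl j =>
    by_cases hodd : i.val % 2 = 1 ∧ j.val % 2 = 1
    · exact ⟨hmW m, by simp [hmW], by simp [hmW],
        by rw [adj_wu]; omega, by rw [adj_wu]; omega⟩
    · obtain ⟨k, hk1, hki, hkj⟩ := pick_odd2 h3m i j hodd
      refine ⟨.inr (.inl k), by simp, by simp, ?_, ?_⟩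
      · rw [adj_vu]; rintro ⟨heq, -⟩; exact hki (by rw [heq])
      · rw [adj_vu]; rintro ⟨heq, -⟩; exact hkj (by rw [heq])
  | .inr (.inl i), .inr (.inl j) =>
    by_cases hodd : i.val % 2 = 1 ∧ j.val % 2 = 1
    · exact ⟨hmW m, by simp [hmW], by simp [hmW],
        by rw [adj_wv]; omega, by rw [adj_wv]; omega⟩
    · obtain ⟨k, hk1, hki, hkj⟩ := pick_odd2 h3m i j hodd
      refine ⟨.inl k, by simp, by simp, ?_, ?_⟩
      · rw [adj_uv]; rintro ⟨heq, -⟩; exact hki (by rw [← heq])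
      · rw [adj_uv]; rintro ⟨heq, -⟩; exact hkj (by rw [← heq])
  | .inl i, .inr (.inr _) =>
    obtain ⟨k, hk1, hki⟩ := pick_odd1 h3m i
    refine ⟨.inr (.inl k), by simp, by simp [hmW], ?_, ?_⟩
    · rw [adj_vu]; rintro ⟨heq, -⟩; exact hki (by rw [heq])
    · show ¬ (Hm m).Adj _ (hmW m); rw [adj_vw]; omega
  | .inr (.inr _), .inl i =>
    obtain ⟨k, hk1, hki⟩ := pick_odd1 h3m i
    refine ⟨.inr (.inl k), by simp [hmW], by simp, ?_, ?_⟩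
    · show ¬ (Hm m).Adj _ (hmW m); rw [adj_vw]; omega
    · rw [adj_vu]; rintro ⟨heq, -⟩; exact hki (by rw [heq])
  | .inr (.inl i), .inr (.inr _) =>
    obtain ⟨k, hk1, hki⟩ := pick_odd1 h3m i
    refine ⟨.inl k, by simp, by simp [hmW], ?_, ?_⟩
    · rw [adj_uv]; rintro ⟨heq, -⟩; exact hki (by rw [← heq])
    · show ¬ (Hm m).Adj _ (hmW m); rw [adj_uw]; omega
  | .inr (.inr _), .inr (.inl i) =>
    obtain ⟨k, hk1, hki⟩ := pick_odd1 h3m i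
    refine ⟨.inl k, by simp [hmW], by simp, ?_, ?_⟩
    · show ¬ (Hm m).Adj _ (hmW m); rw [adj_uw]; omega
    · rw [adj_uv]; rintro ⟨heq, -⟩; exact hki (by rw [← heq])
  | .inr (.inr _), .inr (.inr _) =>
    refine ⟨.inl ⟨1, by omega⟩, by simp [hmW], by simp [hmW], ?_, ?_⟩ <;>
    · show ¬ (Hm m).Adj _ (hmW m); rw [adj_uw]; simp
  | .inl i, .inr (.inl j) =>
    by_cases hio : i.val % 2 = 1
    · by_cases hjo : j.val % 2 = 1
      · exact ⟨hmW m, by simp [hmW], by simp [hmW],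
          by rw [adj_wu]; omega, by rw [adj_wv]; omega⟩
      · refine ⟨.inl ⟨i.val - 1, by omega⟩, by simp [Fin.ext_iff]; omega, by simp, ?_, ?_⟩
        · rw [adj_uu]; simp only [not_not]; omega
        · rw [adj_uv]; rintro ⟨heq, hp⟩; rw [Fin.ext_iff] at heq; simp at heq hp; omega
    · by_cases hjo : j.val % 2 = 1
      · refine ⟨.inr (.inl ⟨j.val - 1, by omega⟩), by simp, by simp [Fin.ext_iff]; omega, ?_, ?_⟩
        · rw [adj_vu]; rintro ⟨-, hp⟩; omega
        · rw [adj_vv]; simp only [not_not]; omega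
      · refine ⟨.inl ⟨i.val + 1, by omega⟩, by simp [Fin.ext_iff], by simp, ?_, ?_⟩
        · rw [adj_uu]; simp only [not_not]; omega
        · rw [adj_uv]; rintro ⟨heq, hp⟩; rw [Fin.ext_iff] at heq; simp at heq hp; omega
  | .inr (.inl j), .inl i =>
    by_cases hio : i.val % 2 = 1
    · by_cases hjo : j.val % 2 = 1
      · exact ⟨hmW m, by simp [hmW], by simp [hmW],
          by rw [adj_wv]; omega, by rw [adj_wu]; omega⟩
      · refine ⟨.inl ⟨i.val - 1, by omega⟩, by simp, by simp [Fin.ext_iff]; omega, ?_, ?_⟩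
        · rw [adj_uv]; rintro ⟨heq, hp⟩; rw [Fin.ext_iff] at heq; simp at heq hp; omega
        · rw [adj_uu]; simp only [not_not]; omega
    · by_cases hjo : j.val % 2 = 1
      · refine ⟨.inr (.inl ⟨j.val - 1, by omega⟩), by simp [Fin.ext_iff]; omega, by simp, ?_, ?_⟩
        · rw [adj_vv]; simp only [not_not]; omega
        · rw [adj_vu]; rintro ⟨-, hp⟩; omega
      · refine ⟨.inl ⟨i.val + 1, by omega⟩, by simp, by simp [Fin.ext_iff], ?_, ?_⟩
        · rw [adj_uv]; rintro ⟨heq, hp⟩; rw [Fin.ext_iff] at heq; simp at heq hp; omega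
        · rw [adj_uu]; simp only [not_not]; omega

lemma reach_self {V : Type*} [DecidableEq V] {G : SimpleGraph V} {D : V → ℕ} {t : V}
    (h : 1 ≤ D t) : KReachable G D 1 t := ⟨D, Relation.ReflTransGen.refl, h⟩

lemma reach_one {V : Type*} [DecidableEq V] {G : SimpleGraph V} {D : V → ℕ} {s t : V}
    (hadj : G.Adj s t) (hs : 2 ≤ D s) : KReachable G D 1 t :=
  ⟨_, Relation.ReflTransGen.single ⟨s, t, hadj, hs, rfl⟩, by simp⟩

lemma reach_two {V : Type*} [DecidableEq V] {G : SimpleGraph V} {D : V → ℕ} {a s t : V}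
    (hadj1 : G.Adj a s) (hadj2 : G.Adj s t) (hat : a ≠ t) (ha : 4 ≤ D a) :
    KReachable G D 1 t := by
  have has : a ≠ s := hadj1.ne
  have hst : s ≠ t := hadj2.ne
  refine ⟨_, Relation.ReflTransGen.head ⟨a, s, hadj1, by omega, rfl⟩
      (Relation.ReflTransGen.head ⟨a, s, hadj1, ?_, rfl⟩
        (Relation.ReflTransGen.single ⟨s, t, hadj2, ?_, rfl⟩)), ?_⟩ <;>
    simp [Function.update_apply, has, hst, hat] <;> omega

lemma pick_even {m : ℕ} (hm : 4 ≤ m) (i : Fin m) (hio : i.val % 2 = 1) :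
    ∃ k : Fin m, k.val % 2 = 0 ∧ k.val / 2 ≠ i.val / 2 := by
  by_cases h1 : i.val = 1
  · exact ⟨⟨2, by omega⟩, by simp, by simp; omega⟩
  · exact ⟨⟨0, by omega⟩, by simp, by simp; omega⟩

lemma solvable_four (m : ℕ) (hm : 4 ≤ m) :
    Solvable (Hm m) (fun x => if x = hmW m then 4 else 0) := by
  intro t
  have hD : (fun x => if x = hmW m then 4 else 0) (hmW m) = 4 := by simp
  match t with
  | .inr (.inr _) => exact reach_self (by simp [hmW])
  | .inl i =>
    by_cases hio : i.val % 2 = 1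
    · obtain ⟨k, hk0, hki⟩ := pick_even hm i hio
      exact reach_two ((adj_wu k).mpr hk0) ((adj_uu k i).mpr hki) (by simp [hmW])
        (le_of_eq hD.symm)
    · exact reach_one ((adj_wu i).mpr (by omega)) (le_trans (by norm_num) (le_of_eq hD.symm))
  | .inr (.inl i) =>
    by_cases hio : i.val % 2 = 1
    · obtain ⟨k, hk0, hki⟩ := pick_even hm i hio
      exact reach_two ((adj_wv k).mpr hk0) ((adj_vv k i).mpr hki) (by simp [hmW])
        (le_of_eq hD.symm)
    · exact reach_one ((adj_wv i).mpr (by omega)) (le_trans (by norm_num) (le_of_eq hD.symm))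

lemma dist_le_two (m : ℕ) (hm : 4 ≤ m) (x : Fin m ⊕ (Fin m ⊕ Unit)) :
    (Hm m).dist (hmW m) x ≤ 2 := by
  match x with
  | .inr (.inr _) =>
    show (Hm m).dist (hmW m) (hmW m) ≤ 2
    simp [SimpleGraph.dist_self]
  | .inl i =>
    by_cases hio : i.val % 2 = 1
    · obtain ⟨k, hk0, hki⟩ := pick_even hm i hio
      exact le_trans (SimpleGraph.dist_le (SimpleGraph.Walk.cons ((adj_wu k).mpr hk0)
        (SimpleGraph.Walk.cons ((adj_uu k i).mpr hki) SimpleGraph.Walk.nil))) (by simp)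
    · exact le_trans (SimpleGraph.dist_le
        (SimpleGraph.Walk.cons ((adj_wu i).mpr (by omega)) SimpleGraph.Walk.nil)) (by simp)
  | .inr (.inl i) =>
    by_cases hio : i.val % 2 = 1
    · obtain ⟨k, hk0, hki⟩ := pick_even hm i hio
      exact le_trans (SimpleGraph.dist_le (SimpleGraph.Walk.cons ((adj_wv k).mpr hk0)
        (SimpleGraph.Walk.cons ((adj_vv k i).mpr hki) SimpleGraph.Walk.nil))) (by simp)
    · exact le_trans (SimpleGraph.dist_le
        (SimpleGraph.Walk.cons ((adj_wv i).mpr (by omega)) SimpleGraph.Walk.nil)) (by simp)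

lemma no_small (m : ℕ) (hm : 4 ≤ m) (heven : Even m) :
    ¬ ∃ D : (Fin m ⊕ (Fin m ⊕ Unit)) → ℕ, Solvable (Hm m) D ∧ distSize D ≤ 3 := by
  rintro ⟨D, hsolv, hsize⟩
  by_cases hbig : ∃ x, 2 ≤ D x
  · obtain ⟨x, hx2⟩ := hbig
    -- find y (possibly = x) so that pebbles live only on {x, y}
    have key : ∃ y, ∀ z, z ≠ x → z ≠ y → D z = 0 := by
      by_cases hy : ∃ y, y ≠ x ∧ 1 ≤ D y
      · obtain ⟨y, hyx, hy1⟩ := hy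
        refine ⟨y, fun z hzx hzy => ?_⟩
        by_contra hz
        have hz1 : 1 ≤ D z := by omega
        have hsub : ∑ v ∈ ({x, y, z} : Finset _), D v ≤ distSize D :=
          Finset.sum_le_sum_of_subset (Finset.subset_univ _)
        have he : ∑ v ∈ ({x, y, z} : Finset _), D v = D x + D y + D z := by
          rw [Finset.sum_insert (by simp [Ne.symm hyx, Ne.symm hzx]),
            Finset.sum_insert (Finset.notMem_singleton.mpr (Ne.symm hzy)),
            Finset.sum_singleton]
          ring
        omega
      · push_neg at hy
        exact ⟨x, fun z hzx _ => by have := hy z hzx; omega⟩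
    obtain ⟨y, hzero⟩ := key
    obtain ⟨t, htx, hty, hax, hay⟩ := separation m hm heven x y
    refine not_reachable_of_far (G := Hm m) (t := t) ?_ hsize (hsolv t)
    intro z hz
    have hzx : z ≠ x := by
      rintro rfl
      rcases hz with rfl | hadj
      · exact htx rfl
      · exact hax hadj
    have hzy : z ≠ y := by
      rintro rfl
      rcases hz with rfl | hadj
      · exact hty rfl
      · exact hay hadj
    exact hzero z hzx hzy
  · push_neg at hbig
    have h1 : ∀ v, D v ≤ 1 := fun v => by have := hbig v; omega
    have hzero : ∃ t, D t = 0 := by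
      by_contra h
      push_neg at h
      have : ∑ v : Fin m ⊕ (Fin m ⊕ Unit), 1 ≤ ∑ v, D v :=
        Finset.sum_le_sum (fun v _ => by have := h v; omega)
      simp only [Finset.sum_const, Finset.card_univ, smul_eq_mul, mul_one] at this
      have hc : Fintype.card (Fin m ⊕ (Fin m ⊕ Unit)) = m + (m + 1) := by
        simp
      rw [hc] at this
      have : distSize D ≤ 3 := hsize
      simp only [distSize] at this
      omega
    obtain ⟨t, ht0⟩ := hzero
    obtain ⟨D', hr, ht⟩ := hsolv t
    rw [reaches_eq_of_no_two h1 hr] at ht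
    omega

theorem Hm_optPebbling_eq_four (m : ℕ) (hm : 4 ≤ m) (heven : Even m) :
    optPebbling (Hm m) = 4 ∧
    (∀ x, (Hm m).dist (hmW m) x ≤ 2) ∧
    Solvable (Hm m) (fun x => if x = hmW m then 4 else 0) ∧
    ¬ ∃ D : (Fin m ⊕ (Fin m ⊕ Unit)) → ℕ, Solvable (Hm m) D ∧ distSize D ≤ 3     := by
  have hsol : Solvable (Hm m) (fun x => if x = hmW m then 4 else 0) := solvable_four m hm
  have hsize4 : distSize (fun x : Fin m ⊕ (Fin m ⊕ Unit) => if x = hmW m then 4 else 0) = 4 := by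
    simp [distSize, Finset.sum_ite_eq']
  have hno := no_small m hm heven
  refine ⟨?_, fun x => dist_le_two m hm x, hsol, hno⟩
  have hmem : 4 ∈ {n | ∃ D, Solvable (Hm m) D ∧ distSize D = n} := ⟨_, hsol, hsize4⟩
  apply le_antisymm
  · exact Nat.sInf_le hmem
  · refine le_csInf ⟨4, hmem⟩ ?_
    rintro n ⟨D, hs, rfl⟩
    by_contra h
    push_neg at h
    exact hno ⟨D, hs, by omega⟩
end
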